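/- arXiv:1906.10949 — 4 statements merged into one kernel-verified Lean document; each statement's English description precedes it below -/
import Mathlib

section
/- Let 0 < τ ≤ t, and let (X_k)_{k≥1} and (Y_k)_{k≥1} be ℕ-valued random variables, all mutually independent, with X_k Poisson-distributed with parameter p_k τ and Y_k Poisson-distributed with parameter p_k (t − τ). Set U_τ = Σ_{k≥1} 1{X_k is odd} and U_t = Σ_{k≥1} 1{X_k + Y_k is odd} (both series converge a.s. and define square-integrable random variables). Then Cov(U_τ, U_t) = (1/4) Σ_{k≥1} ( e^{−2 p_k (t − τ)} − e^{−2 p_k (t + τ)} ). -/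
open Filter Topology Real MeasureTheory ProbabilityTheory
open scoped RealInnerProductSpace

lemma natSet_measurable (s : Set ℕ) : MeasurableSet s := (Set.to_countable s).measurableSet
lemma natProdSet_measurable (s : Set (ℕ × ℕ)) : MeasurableSet s :=
  (Set.to_countable s).measurableSet

lemma poisson_odd {Ω : Type*} [MeasurableSpace Ω] (P : Measure Ω) [IsProbabilityMeasure P]
    (Z : Ω → ℕ) (hZ : Measurable Z) (l : ℝ) (hl : 0 ≤ l)
    (h : ∀ j : ℕ, (P {ω | Z ω = j}).toReal = Real.exp (-l) * l ^ j / j.factorial) :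
    (P {ω | Odd (Z ω)}).toReal = (1 - Real.exp (-(2 * l))) / 2 := by
  have hsets : ∀ j : ℕ, MeasurableSet {ω | Z ω = j} := fun j => hZ (natSet_measurable {j})
  have hunion : {ω | Odd (Z ω)} = ⋃ j : ℕ, {ω | Z ω = 2 * j + 1} := by
    ext ω
    simp only [Set.mem_iUnion, Set.mem_setOf_eq]
    constructor
    · rintro ⟨m, hm⟩; exact ⟨m, by omega⟩
    · rintro ⟨m, hm⟩; exact ⟨m, by omega⟩
  have hdisj : Pairwise (Function.onFun Disjoint fun j : ℕ => {ω | Z ω = 2 * j + 1}) := by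
    intro i j hij
    simp only [Function.onFun, Set.disjoint_left, Set.mem_setOf_eq]
    intro ω h1 h2; omega
  have key : (P {ω | Odd (Z ω)}).toReal = ∑' j : ℕ, (P {ω | Z ω = 2 * j + 1}).toReal := by
    rw [hunion, measure_iUnion hdisj (fun j => hsets _),
      ENNReal.tsum_toReal_eq (fun j => measure_ne_top P _)]
  set f : ℕ → ℝ := fun n => l ^ n / n.factorial with hf_def
  have hf : Summable f := Real.summable_pow_div_factorial l
  have hfsum : ∑' n, f n = Real.exp l := by
    rw [Real.exp_eq_exp_ℝ, NormedSpace.exp_eq_tsum_div]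
  set g : ℕ → ℝ := fun n => (-l) ^ n / n.factorial with hg_def
  have hg : Summable g := Real.summable_pow_div_factorial (-l)
  have hgsum : ∑' n, g n = Real.exp (-l) := by
    rw [Real.exp_eq_exp_ℝ, NormedSpace.exp_eq_tsum_div]
  have hinj2 : Function.Injective (fun k : ℕ => 2 * k) := fun a b hab => by simp only at hab; omega
  have hinj21 : Function.Injective (fun k : ℕ => 2 * k + 1) := fun a b hab => by simp only at hab; omega
  have h1 : (∑' k, f (2 * k)) + ∑' k, f (2 * k + 1) = Real.exp l := by
    rw [tsum_even_add_odd (hf.comp_injective hinj2) (hf.comp_injective hinj21), hfsum]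
  have h2 : (∑' k, f (2 * k)) - ∑' k, f (2 * k + 1) = Real.exp (-l) := by
    have he : ∀ k, g (2 * k) = f (2 * k) := fun k => by
      simp only [hf_def, hg_def, Even.neg_pow (even_two_mul k)]
    have ho : ∀ k, g (2 * k + 1) = -f (2 * k + 1) := fun k => by
      simp only [hf_def, hg_def, Odd.neg_pow (odd_two_mul_add_one k), neg_div]
    have := tsum_even_add_odd (hg.comp_injective hinj2) (hg.comp_injective hinj21)
    rw [hgsum] at this
    rw [tsum_congr he, tsum_congr ho, tsum_neg] at this
    linarith
  have hO : ∑' k, f (2 * k + 1) = (Real.exp l - Real.exp (-l)) / 2 := by linarith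
  rw [key]
  have : ∀ j : ℕ, (P {ω | Z ω = 2 * j + 1}).toReal = Real.exp (-l) * f (2 * j + 1) := by
    intro j; rw [h (2 * j + 1), hf_def, mul_div_assoc]
  rw [tsum_congr this, tsum_mul_left, hO]
  have e1 : Real.exp (-l) * Real.exp l = 1 := by rw [← Real.exp_add]; simp
  have e2 : Real.exp (-l) * Real.exp (-l) = Real.exp (-(2 * l)) := by
    rw [← Real.exp_add]; ring_nf
  nlinarith [e1, e2]

lemma integral_indicator_sum {Ω : Type*} [MeasurableSpace Ω] (P : Measure Ω)
    [IsProbabilityMeasure P] (v : ℕ → Set Ω) (hv : ∀ k, MeasurableSet (v k)) (s : Finset ℕ) :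
    ∫ ω, (∑ k ∈ s, (v k).indicator (fun _ => (1:ℝ)) ω) ∂P
      = ∑ k ∈ s, (P (v k)).toReal := by
  rw [integral_finset_sum _ (fun k _ => (integrable_const (1:ℝ)).indicator (hv k))]
  exact Finset.sum_congr rfl fun k _ => integral_indicator_one (hv k)

lemma integral_indicator_sum_mul {Ω : Type*} [MeasurableSpace Ω] (P : Measure Ω)
    [IsProbabilityMeasure P] (v w : ℕ → Set Ω) (hv : ∀ k, MeasurableSet (v k))
    (hw : ∀ k, MeasurableSet (w k)) (s s' : Finset ℕ) :
    ∫ ω, (∑ j ∈ s, (v j).indicator (fun _ => (1:ℝ)) ω)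
        * (∑ k ∈ s', (w k).indicator (fun _ => (1:ℝ)) ω) ∂P
      = ∑ j ∈ s, ∑ k ∈ s', (P (v j ∩ w k)).toReal := by
  have hsq : ∀ ω, (∑ j ∈ s, (v j).indicator (fun _ => (1:ℝ)) ω)
      * (∑ k ∈ s', (w k).indicator (fun _ => (1:ℝ)) ω)
      = ∑ j ∈ s, ∑ k ∈ s', (v j ∩ w k).indicator (fun _ => (1:ℝ)) ω := by
    intro ω
    rw [Finset.sum_mul_sum]
    refine Finset.sum_congr rfl fun j _ => Finset.sum_congr rfl fun k _ => ?_
    by_cases hj : ω ∈ v j <;> by_cases hk : ω ∈ w k <;>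
      simp [Set.indicator_apply, hj, hk, Set.mem_inter_iff]
  simp_rw [hsq]
  rw [integral_finset_sum _ (fun j _ => integrable_finset_sum _ (fun k _ =>
    (integrable_const (1:ℝ)).indicator ((hv j).inter (hw k))))]
  refine Finset.sum_congr rfl fun j _ => ?_
  rw [integral_finset_sum _ (fun k _ =>
    (integrable_const (1:ℝ)).indicator ((hv j).inter (hw k)))]
  exact Finset.sum_congr rfl fun k _ => integral_indicator_one ((hv j).inter (hw k))

lemma prob_compl_toReal {Ω : Type*} [MeasurableSpace Ω] (P : Measure Ω)
    [IsProbabilityMeasure P] {s : Set Ω} (hs : MeasurableSet s) :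
    (P sᶜ).toReal = 1 - (P s).toReal := by
  rw [measure_compl hs (measure_ne_top P _), measure_univ,
    ENNReal.toReal_sub_of_le prob_le_one ENNReal.one_ne_top, ENNReal.toReal_one]

lemma aux_inner {Ω : Type*} [MeasurableSpace Ω] (P : Measure Ω) [IsProbabilityMeasure P]
    (f g : Ω → ℝ) (hf : MemLp f 2 P) (hg : MemLp g 2 P) :
    ⟪hf.toLp f, hg.toLp g⟫ = ∫ ω, f ω * g ω ∂P := by
  rw [MeasureTheory.L2.inner_def]
  apply integral_congr_ae
  filter_upwards [hf.coeFn_toLp, hg.coeFn_toLp] with ω h1 h2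
  simp [RCLike.inner_apply, h1, h2, mul_comm]

lemma aux_L2 {Ω : Type*} [MeasurableSpace Ω] (P : Measure Ω) [IsProbabilityMeasure P]
    (v : ℕ → Set Ω) (hv : ∀ k, MeasurableSet (v k))
    (q : ℕ → ℝ) (hq : Summable q) (hle : ∀ k, (P (v k)).toReal ≤ q k)
    (hcross : ∀ j k, j ≠ k → P (v j ∩ v k) = P (v j) * P (v k)) :
    (∀ᵐ ω ∂P, Summable fun k => (v k).indicator (fun _ => (1:ℝ)) ω) ∧
    ∃ F : Lp ℝ 2 P,
      ((fun ω => ∑' k, (v k).indicator (fun _ => (1:ℝ)) ω) =ᵐ[P] F) ∧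
      ∀ (mem : ∀ n, MemLp (fun ω => ∑ k ∈ Finset.range n,
          (v k).indicator (fun _ => (1:ℝ)) ω) 2 P),
        Tendsto (fun n => (mem n).toLp _) atTop (𝓝 F) := by
  have hq0 : ∀ k, 0 ≤ q k := fun k => le_trans ENNReal.toReal_nonneg (hle k)
  set A : ℕ → Ω → ℝ := fun k => (v k).indicator (fun _ => (1:ℝ)) with hA_def
  -- a.e. summability
  have htsum_ne_top : ∑' k, P (v k) ≠ ⊤ := by
    have h1 : ∀ k, P (v k) ≤ ENNReal.ofReal (q k) := fun k => by
      rw [← ENNReal.ofReal_toReal (measure_ne_top P (v k))]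
      exact ENNReal.ofReal_le_ofReal (hle k)
    have h2 : ∑' k, P (v k) ≤ ∑' k, ENNReal.ofReal (q k) := ENNReal.tsum_le_tsum h1
    rw [← ENNReal.ofReal_tsum_of_nonneg hq0 hq] at h2
    exact ne_top_of_le_ne_top ENNReal.ofReal_ne_top h2
  have hae : ∀ᵐ ω ∂P, Summable fun k => A k ω := by
    filter_upwards [ae_eventually_notMem htsum_ne_top] with ω hω
    obtain ⟨N, hN⟩ := eventually_atTop.1 hω
    apply summable_of_ne_finset_zero (s := Finset.range N)
    intro k hk
    have hkN : N ≤ k := by simpa using hk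
    simp [hA_def, Set.indicator_of_notMem (hN k hkN)]
  refine ⟨hae, ?_⟩
  have hmem : ∀ n, MemLp (fun ω => ∑ k ∈ Finset.range n, A k ω) 2 P := fun n =>
    memLp_finset_sum _ (fun k _ => (memLp_const (1:ℝ)).indicator (hv k))
  -- key estimate
  have hkey : ∀ m n, m ≤ n →
      ∫ ω, (∑ k ∈ Finset.Ico m n, A k ω) ^ 2 ∂P
        ≤ (∑ k ∈ Finset.Ico m n, q k) + (∑ k ∈ Finset.Ico m n, q k) ^ 2 := by
    intro m n _
    have hsq : ∀ ω, (∑ k ∈ Finset.Ico m n, A k ω) ^ 2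
        = ∑ j ∈ Finset.Ico m n, ∑ k ∈ Finset.Ico m n,
            (v j ∩ v k).indicator (fun _ => (1:ℝ)) ω := by
      intro ω
      rw [sq, Finset.sum_mul_sum]
      refine Finset.sum_congr rfl fun j _ => Finset.sum_congr rfl fun k _ => ?_
      by_cases hj : ω ∈ v j <;> by_cases hk : ω ∈ v k <;>
        simp [hA_def, Set.indicator_apply, hj, hk, Set.mem_inter_iff]
    have hint : ∫ ω, (∑ k ∈ Finset.Ico m n, A k ω) ^ 2 ∂P
        = ∑ j ∈ Finset.Ico m n, ∑ k ∈ Finset.Ico m n, (P (v j ∩ v k)).toReal := by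
      simp_rw [hsq]
      rw [integral_finset_sum _ (fun j _ => integrable_finset_sum _ (fun k _ =>
        (integrable_const (1:ℝ)).indicator ((hv j).inter (hv k))))]
      refine Finset.sum_congr rfl fun j _ => ?_
      rw [integral_finset_sum _ (fun k _ => (integrable_const (1:ℝ)).indicator ((hv j).inter (hv k)))]
      exact Finset.sum_congr rfl fun k _ => integral_indicator_one ((hv j).inter (hv k))
    rw [hint]
    have hterm : ∀ j ∈ Finset.Ico m n, ∀ k ∈ Finset.Ico m n,
        (P (v j ∩ v k)).toReal ≤ q j * q k + (if j = k then q k else 0) := by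
      intro j _ k _
      by_cases hjk : j = k
      · subst hjk
        rw [Set.inter_self, if_pos rfl]
        nlinarith [hle j, hq0 j, mul_nonneg (hq0 j) (hq0 j), ENNReal.toReal_nonneg (a := P (v j))]
      · rw [hcross j k hjk, ENNReal.toReal_mul, if_neg hjk, add_zero]
        exact mul_le_mul (hle j) (hle k) ENNReal.toReal_nonneg (hq0 j)
    calc ∑ j ∈ Finset.Ico m n, ∑ k ∈ Finset.Ico m n, (P (v j ∩ v k)).toReal
        ≤ ∑ j ∈ Finset.Ico m n, ∑ k ∈ Finset.Ico m n,
            (q j * q k + if j = k then q k else 0) :=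
          Finset.sum_le_sum fun j hj => Finset.sum_le_sum (hterm j hj)
      _ = (∑ k ∈ Finset.Ico m n, q k) + (∑ k ∈ Finset.Ico m n, q k) ^ 2 := by
          simp_rw [Finset.sum_add_distrib, ← Finset.mul_sum, ← Finset.sum_mul, Finset.sum_ite_eq]
          rw [sq]
          have : ∑ j ∈ Finset.Ico m n, (if j ∈ Finset.Ico m n then q j else 0)
              = ∑ j ∈ Finset.Ico m n, q j :=
            Finset.sum_congr rfl fun j hj => if_pos hj
          rw [this]; ring
  -- norm of difference
  have hnorm : ∀ m n, m ≤ n →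
      ‖(hmem n).toLp _ - (hmem m).toLp _‖ ^ 2
        ≤ (∑ k ∈ Finset.Ico m n, q k) + (∑ k ∈ Finset.Ico m n, q k) ^ 2 := by
    intro m n hmn
    have hsub : MemLp ((fun ω => ∑ k ∈ Finset.range n, A k ω)
        - fun ω => ∑ k ∈ Finset.range m, A k ω) 2 P := (hmem n).sub (hmem m)
    have h1 : (hmem n).toLp _ - (hmem m).toLp _ = hsub.toLp _ :=
      (MemLp.toLp_sub (hmem n) (hmem m)).symm
    rw [h1, ← real_inner_self_eq_norm_sq, aux_inner]
    have : ∀ ω, ((fun ω => ∑ k ∈ Finset.range n, A k ω)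
        - fun ω => ∑ k ∈ Finset.range m, A k ω) ω
        = ∑ k ∈ Finset.Ico m n, A k ω := by
      intro ω
      simp only [Pi.sub_apply]
      rw [Finset.sum_Ico_eq_sub _ hmn]
    calc ∫ ω, ((fun ω => ∑ k ∈ Finset.range n, A k ω)
          - fun ω => ∑ k ∈ Finset.range m, A k ω) ω
          * ((fun ω => ∑ k ∈ Finset.range n, A k ω)
          - fun ω => ∑ k ∈ Finset.range m, A k ω) ω ∂P
        = ∫ ω, (∑ k ∈ Finset.Ico m n, A k ω) ^ 2 ∂P := by
          apply integral_congr_ae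
          filter_upwards with ω
          rw [this ω, sq]
      _ ≤ _ := hkey m n hmn
  -- tail control
  have htail : ∀ δ > (0:ℝ), ∃ N : ℕ, ∀ m n, N ≤ m → m ≤ n →
      ∑ k ∈ Finset.Ico m n, q k < δ := by
    intro δ hδ
    have hc : CauchySeq (fun n => ∑ k ∈ Finset.range n, q k) :=
      hq.hasSum.tendsto_sum_nat.cauchySeq
    rw [Metric.cauchySeq_iff] at hc
    obtain ⟨N, hN⟩ := hc δ hδ
    refine ⟨N, fun m n hm hmn => ?_⟩
    have hd := hN n (le_trans hm hmn) m hm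
    rw [Real.dist_eq] at hd
    rw [Finset.sum_Ico_eq_sub _ hmn]
    exact lt_of_le_of_lt (le_abs_self _) hd
  have hCauchy : CauchySeq (fun n => (hmem n).toLp _) := by
    rw [Metric.cauchySeq_iff]
    intro ε hε
    have hδ : 0 < min (ε ^ 2 / 4) 1 := lt_min (by positivity) one_pos
    obtain ⟨N, hN⟩ := htail _ hδ
    refine ⟨N, fun n hn m hm => ?_⟩
    have main : ∀ m n, N ≤ m → m ≤ n →
        dist ((hmem n).toLp _) ((hmem m).toLp _) < ε := by
      intro m n hm hmn
      have h1 := hnorm m n hmn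
      have h2 := hN m n hm hmn
      have hnn : 0 ≤ ∑ k ∈ Finset.Ico m n, q k := Finset.sum_nonneg fun k _ => hq0 k
      have hd1 : min (ε ^ 2 / 4) 1 ≤ ε ^ 2 / 4 := min_le_left _ _
      have hd2 : min (ε ^ 2 / 4) 1 ≤ 1 := min_le_right _ _
      rw [dist_eq_norm]
      nlinarith [norm_nonneg ((hmem n).toLp _ - (hmem m).toLp _)]
    rcases le_total m n with h | h
    · exact main m n hm h
    · rw [dist_comm]; exact main n m hn h
  obtain ⟨F, hF⟩ := cauchySeq_tendsto_of_complete hCauchy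
  have hmeasTendsto := MeasureTheory.tendstoInMeasure_of_tendsto_Lp hF
  obtain ⟨ns, hns_mono, hns⟩ := hmeasTendsto.exists_seq_tendsto_ae
  have hFae : (fun ω => ∑' k, A k ω) =ᵐ[P] F := by
    have hcoe : ∀ᵐ ω ∂P, ∀ n : ℕ,
        ((hmem n).toLp _ : Lp ℝ 2 P) ω = ∑ k ∈ Finset.range n, A k ω :=
      ae_all_iff.2 fun n => (hmem n).coeFn_toLp
    filter_upwards [hns, hae, hcoe] with ω h1 h2 h3
    have hS : Tendsto (fun n => ∑ k ∈ Finset.range n, A k ω) atTop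
        (𝓝 (∑' k, A k ω)) := h2.hasSum.tendsto_sum_nat
    have hsub := hS.comp hns_mono.tendsto_atTop
    have h1' : Tendsto (fun i => ∑ k ∈ Finset.range (ns i), A k ω) atTop
        (𝓝 (F ω)) := h1.congr fun i => h3 (ns i)
    exact tendsto_nhds_unique hsub h1'
  exact ⟨F, hFae, fun mem => hF⟩

/-- Covariance of the Poissonized odd-occupancy process at times `τ ≤ t`:
`Cov(U(τ), U(t)) = (1/4) ∑_k (e^{−2p_k(t−τ)} − e^{−2p_k(t+τ)})`. -/
theorem covariance_odd_occupancy
    {Ω : Type*} [MeasurableSpace Ω] (P : Measure Ω) [IsProbabilityMeasure P]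
    (p : ℕ → ℝ) (hp_pos : ∀ k, 0 < p k) (hp_sum : ∑' k, p k = 1)
    (τ t : ℝ) (hτ : 0 < τ) (hτt : τ ≤ t)
    (X Y : ℕ → Ω → ℕ) (hX_meas : ∀ k, Measurable (X k)) (hY_meas : ∀ k, Measurable (Y k))
    (h_indep : iIndepFun (Sum.elim X Y) P)
    (hX : ∀ k, ∀ j : ℕ, (P {ω | X k ω = j}).toReal
      = Real.exp (-(p k * τ)) * (p k * τ) ^ j / j.factorial)
    (hY : ∀ k, ∀ j : ℕ, (P {ω | Y k ω = j}).toReal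
      = Real.exp (-(p k * (t - τ))) * (p k * (t - τ)) ^ j / j.factorial)
    (Uτ Ut : Ω → ℝ)
    (hUτ : ∀ ω, Uτ ω = ∑' k, if Odd (X k ω) then (1 : ℝ) else 0)
    (hUt : ∀ ω, Ut ω = ∑' k, if Odd (X k ω + Y k ω) then (1 : ℝ) else 0) :
    (∀ᵐ ω ∂P, Summable fun k => if Odd (X k ω) then (1 : ℝ) else 0) ∧
    (∀ᵐ ω ∂P, Summable fun k => if Odd (X k ω + Y k ω) then (1 : ℝ) else 0) ∧
    MemLp Uτ 2 P ∧ MemLp Ut 2 P ∧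
    (∫ ω, (Uτ ω - ∫ ω', Uτ ω' ∂P) * (Ut ω - ∫ ω', Ut ω' ∂P) ∂P)
      = (1 / 4) * ∑' k, (Real.exp (-(2 * p k * (t - τ)))
          - Real.exp (-(2 * p k * (t + τ)))) := by
  classical
  have hp_summable : Summable p := by
    by_contra h
    rw [tsum_eq_zero_of_not_summable h] at hp_sum
    norm_num at hp_sum
  have htτ : 0 ≤ t - τ := by linarith
  set sA : ℕ → Set Ω := fun k => {ω | Odd (X k ω)} with hsA_def
  set sB : ℕ → Set Ω := fun k => {ω | Odd (X k ω + Y k ω)} with hsB_def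
  have hsA_meas : ∀ k, MeasurableSet (sA k) := fun k =>
    hX_meas k (natSet_measurable {n | Odd n})
  have hsB_meas : ∀ k, MeasurableSet (sB k) :=
    fun k => ((hX_meas k).prodMk (hY_meas k)) (natProdSet_measurable {q | Odd (q.1 + q.2)})
  -- probabilities
  have ha : ∀ k, (P (sA k)).toReal = (1 - Real.exp (-(2 * (p k * τ)))) / 2 := fun k =>
    poisson_odd P (X k) (hX_meas k) (p k * τ)
      (mul_nonneg (hp_pos k).le hτ.le) (hX k)
  have hYodd : ∀ k, (P {ω | Odd (Y k ω)}).toReal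
      = (1 - Real.exp (-(2 * (p k * (t - τ))))) / 2 := fun k =>
    poisson_odd P (Y k) (hY_meas k) (p k * (t - τ))
      (mul_nonneg (hp_pos k).le htτ) (hY k)
  have hYe_meas : ∀ k, MeasurableSet {ω | Odd (Y k ω)} := fun k =>
    hY_meas k (natSet_measurable {n | Odd n})
  have hγ : ∀ k, (P ({ω | Odd (Y k ω)}ᶜ)).toReal
      = (1 + Real.exp (-(2 * (p k * (t - τ))))) / 2 := by
    intro k
    rw [prob_compl_toReal P (hYe_meas k), hYodd k]
    ring
  -- independence
  have helim_meas : ∀ i : ℕ ⊕ ℕ, Measurable (Sum.elim X Y i) := by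
    intro i; cases i with
    | inl k => exact hX_meas k
    | inr k => exact hY_meas k
  have hpair : ∀ j k : ℕ, j ≠ k → IndepFun (fun ω => (X j ω, Y j ω))
      (fun ω => (X k ω, Y k ω)) P := by
    intro j k hjk
    exact h_indep.indepFun_prodMk_prodMk helim_meas (Sum.inl j) (Sum.inr j)
      (Sum.inl k) (Sum.inr k) (by simp [hjk]) (by simp) (by simp) (by simp [hjk])
  have hcross : ∀ (j k : ℕ), j ≠ k → ∀ (s u : Set (ℕ × ℕ)),
      P ((fun ω => (X j ω, Y j ω)) ⁻¹' s ∩ (fun ω => (X k ω, Y k ω)) ⁻¹' u)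
        = P ((fun ω => (X j ω, Y j ω)) ⁻¹' s) * P ((fun ω => (X k ω, Y k ω)) ⁻¹' u) :=
    fun j k hjk s u => (hpair j k hjk).measure_inter_preimage_eq_mul s u
      (natProdSet_measurable s) (natProdSet_measurable u)
  have hcrossA : ∀ j k, j ≠ k → P (sA j ∩ sA k) = P (sA j) * P (sA k) := by
    intro j k hjk
    exact hcross j k hjk {q | Odd q.1} {q | Odd q.1}
  have hcrossB : ∀ j k, j ≠ k → P (sB j ∩ sB k) = P (sB j) * P (sB k) := by
    intro j k hjk
    exact hcross j k hjk {q | Odd (q.1 + q.2)} {q | Odd (q.1 + q.2)}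
  have hcrossAB : ∀ j k, j ≠ k → P (sA j ∩ sB k) = P (sA j) * P (sB k) := by
    intro j k hjk
    exact hcross j k hjk {q | Odd q.1} {q | Odd (q.1 + q.2)}
  have hXY_indep : ∀ k, IndepFun (X k) (Y k) P := fun k =>
    h_indep.indepFun (by simp : (Sum.inl k : ℕ ⊕ ℕ) ≠ Sum.inr k)
  have hdiag : ∀ k, P (sA k ∩ sB k) = P (sA k) * P ({ω | Odd (Y k ω)}ᶜ) := by
    intro k
    have hseq : sA k ∩ sB k = X k ⁻¹' {n | Odd n} ∩ Y k ⁻¹' {n | Odd n}ᶜ := by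
      ext ω
      simp only [hsA_def, hsB_def, Set.mem_inter_iff, Set.mem_setOf_eq, Set.mem_preimage,
        Set.mem_compl_iff, Nat.odd_iff]
      omega
    rw [hseq, (hXY_indep k).measure_inter_preimage_eq_mul _ _ (natSet_measurable _)
      (natSet_measurable _)]
    rfl
  -- b formula
  have hb : ∀ k, (P (sB k)).toReal
      = (P (sA k)).toReal * (P ({ω | Odd (Y k ω)}ᶜ)).toReal
        + (1 - (P (sA k)).toReal) * (1 - (P ({ω | Odd (Y k ω)}ᶜ)).toReal) := by
    intro k
    have hsplit : sB k = (X k ⁻¹' {n | Odd n} ∩ Y k ⁻¹' {n | Odd n}ᶜ)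
        ∪ (X k ⁻¹' {n | Odd n}ᶜ ∩ Y k ⁻¹' {n | Odd n}) := by
      ext ω
      simp only [hsB_def, Set.mem_setOf_eq, Set.mem_union, Set.mem_inter_iff,
        Set.mem_preimage, Set.mem_compl_iff, Nat.odd_iff]
      omega
    have hdisj : Disjoint (X k ⁻¹' {n | Odd n} ∩ Y k ⁻¹' {n | Odd n}ᶜ)
        (X k ⁻¹' {n | Odd n}ᶜ ∩ Y k ⁻¹' {n | Odd n}) := by
      rw [Set.disjoint_left]
      rintro ω ⟨h1, -⟩ ⟨h2, -⟩
      exact h2 h1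
    rw [hsplit, measure_union hdisj
      ((hX_meas k (natSet_measurable _)).inter (hY_meas k (natSet_measurable _))),
      (hXY_indep k).measure_inter_preimage_eq_mul _ _ (natSet_measurable _)
        (natSet_measurable _),
      (hXY_indep k).measure_inter_preimage_eq_mul _ _ (natSet_measurable _)
        (natSet_measurable _),
      ENNReal.toReal_add (by finiteness) (by finiteness), ENNReal.toReal_mul,
      ENNReal.toReal_mul]
    have e1 : (P (X k ⁻¹' {n | Odd n}ᶜ)).toReal = 1 - (P (sA k)).toReal := by
      rw [Set.preimage_compl, prob_compl_toReal P (hX_meas k (natSet_measurable {n | Odd n}))]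
      rfl
    have e2 : (P (Y k ⁻¹' {n | Odd n})).toReal
        = 1 - (P ({ω | Odd (Y k ω)}ᶜ)).toReal := by
      rw [prob_compl_toReal P (hYe_meas k)]
      have : P (Y k ⁻¹' {n | Odd n}) = P {ω | Odd (Y k ω)} := rfl
      rw [this]; ring
    rw [e1, e2]
    rfl
  -- bounds
  have hq_sum : Summable (fun k => p k * t) := hp_summable.mul_right t
  have haτ : ∀ k, (P (sA k)).toReal ≤ p k * τ := by
    intro k
    rw [ha k]
    have h1 := Real.add_one_le_exp (-(2 * (p k * τ)))
    linarith
  have haq : ∀ k, (P (sA k)).toReal ≤ p k * t := fun k =>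
    le_trans (haτ k) (by nlinarith [(hp_pos k).le])
  have hbq : ∀ k, (P (sB k)).toReal ≤ p k * t := by
    intro k
    rw [hb k, ha k, hγ k]
    have h1 := Real.add_one_le_exp (-(2 * (p k * (t - τ))))
    have h2 := Real.add_one_le_exp (-(2 * (p k * τ)))
    have hE0 := Real.exp_nonneg (-(2 * (p k * τ)))
    have hD0 := Real.exp_nonneg (-(2 * (p k * (t - τ))))
    have hE1 : Real.exp (-(2 * (p k * τ))) ≤ 1 :=
      Real.exp_le_one_iff.mpr (by nlinarith [(hp_pos k).le])
    have hD1 : Real.exp (-(2 * (p k * (t - τ)))) ≤ 1 :=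
      Real.exp_le_one_iff.mpr (by nlinarith [(hp_pos k).le])
    nlinarith [(hp_pos k).le]
  -- apply the L² machinery
  obtain ⟨haeA, FA, hFAae, hFA_t⟩ := aux_L2 P sA hsA_meas _ hq_sum haq hcrossA
  obtain ⟨haeB, FB, hFBae, hFB_t⟩ := aux_L2 P sB hsB_meas _ hq_sum hbq hcrossB
  have hindA : ∀ (ω : Ω) (k : ℕ),
      (sA k).indicator (fun _ => (1:ℝ)) ω = if Odd (X k ω) then 1 else 0 := by
    intro ω k
    rw [Set.indicator_apply]
    exact if_congr Iff.rfl rfl rfl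
  have hindB : ∀ (ω : Ω) (k : ℕ),
      (sB k).indicator (fun _ => (1:ℝ)) ω = if Odd (X k ω + Y k ω) then 1 else 0 := by
    intro ω k
    rw [Set.indicator_apply]
    exact if_congr Iff.rfl rfl rfl
  have goal1 : ∀ᵐ ω ∂P, Summable fun k => if Odd (X k ω) then (1:ℝ) else 0 := by
    filter_upwards [haeA] with ω h
    exact h.congr (hindA ω)
  have goal2 : ∀ᵐ ω ∂P, Summable fun k => if Odd (X k ω + Y k ω) then (1:ℝ) else 0 := by
    filter_upwards [haeB] with ω h
    exact h.congr (hindB ω)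
  have hUτ_eq : Uτ = fun ω => ∑' k, (sA k).indicator (fun _ => (1:ℝ)) ω := by
    funext ω; rw [hUτ ω]; exact (tsum_congr (hindA ω)).symm
  have hUt_eq : Ut = fun ω => ∑' k, (sB k).indicator (fun _ => (1:ℝ)) ω := by
    funext ω; rw [hUt ω]; exact (tsum_congr (hindB ω)).symm
  have hUτFA : Uτ =ᵐ[P] FA := hUτ_eq ▸ hFAae
  have hUtFB : Ut =ᵐ[P] FB := hUt_eq ▸ hFBae
  have memUτ : MemLp Uτ 2 P := (Lp.memLp FA).ae_eq hUτFA.symm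
  have memUt : MemLp Ut 2 P := (Lp.memLp FB).ae_eq hUtFB.symm
  refine ⟨goal1, goal2, memUτ, memUt, ?_⟩
  -- partial sums in L²
  have memS : ∀ n, MemLp (fun ω => ∑ k ∈ Finset.range n,
      (sA k).indicator (fun _ => (1:ℝ)) ω) 2 P := fun n =>
    memLp_finset_sum _ (fun k _ => (memLp_const (1:ℝ)).indicator (hsA_meas k))
  have memT : ∀ n, MemLp (fun ω => ∑ k ∈ Finset.range n,
      (sB k).indicator (fun _ => (1:ℝ)) ω) 2 P := fun n =>
    memLp_finset_sum _ (fun k _ => (memLp_const (1:ℝ)).indicator (hsB_meas k))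
  have hSt := hFA_t memS
  have hTt := hFB_t memT
  set o : Lp ℝ 2 P := (memLp_const (1:ℝ)).toLp _ with ho_def
  have hfS1 : ∀ n, ⟪(memS n).toLp _, o⟫ = ∑ k ∈ Finset.range n, (P (sA k)).toReal := by
    intro n
    rw [ho_def, aux_inner]
    simp_rw [mul_one]
    exact integral_indicator_sum P sA hsA_meas _
  have hfT1 : ∀ n, ⟪(memT n).toLp _, o⟫ = ∑ k ∈ Finset.range n, (P (sB k)).toReal := by
    intro n
    rw [ho_def, aux_inner]
    simp_rw [mul_one]
    exact integral_indicator_sum P sB hsB_meas _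
  have hST : ∀ n, ⟪(memS n).toLp _, (memT n).toLp _⟫
      = ∑ j ∈ Finset.range n, ∑ k ∈ Finset.range n, (P (sA j ∩ sB k)).toReal := by
    intro n
    rw [aux_inner]
    exact integral_indicator_sum_mul P sA sB hsA_meas hsB_meas _ _
  have hlim : Tendsto (fun n => ⟪(memS n).toLp _, (memT n).toLp _⟫
      - ⟪(memS n).toLp _, o⟫ * ⟪(memT n).toLp _, o⟫) atTop
      (𝓝 (⟪FA, FB⟫ - ⟪FA, o⟫ * ⟪FB, o⟫)) :=
    (hSt.inner hTt).sub ((hSt.inner tendsto_const_nhds).mul (hTt.inner tendsto_const_nhds))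
  have hinner_FAFB : ⟪FA, FB⟫ = ∫ ω, Uτ ω * Ut ω ∂P := by
    rw [MeasureTheory.L2.inner_def]
    apply integral_congr_ae
    filter_upwards [hUτFA, hUtFB] with ω h1 h2
    simp [RCLike.inner_apply, ← h1, ← h2, mul_comm]
  have hinner_FAo : ⟪FA, o⟫ = ∫ ω, Uτ ω ∂P := by
    rw [ho_def, MeasureTheory.L2.inner_def]
    apply integral_congr_ae
    filter_upwards [hUτFA, (memLp_const (1:ℝ) (p := 2) (μ := P)).coeFn_toLp] with ω h1 h2
    simp only [RCLike.inner_apply, starRingEnd_apply, star_trivial, h2, mul_one]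
    exact (one_mul _).trans h1.symm
  have hinner_FBo : ⟪FB, o⟫ = ∫ ω, Ut ω ∂P := by
    rw [ho_def, MeasureTheory.L2.inner_def]
    apply integral_congr_ae
    filter_upwards [hUtFB, (memLp_const (1:ℝ) (p := 2) (μ := P)).coeFn_toLp] with ω h1 h2
    simp only [RCLike.inner_apply, starRingEnd_apply, star_trivial, h2, mul_one]
    exact (one_mul _).trans h1.symm
  set c : ℕ → ℝ := fun k => (1/4) * (Real.exp (-(2 * p k * (t - τ)))
    - Real.exp (-(2 * p k * (t + τ)))) with hc_def
  have hdiag_c : ∀ k, (P (sA k ∩ sB k)).toReal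
      - (P (sA k)).toReal * (P (sB k)).toReal = c k := by
    intro k
    simp only [hc_def]
    rw [hdiag k, ENNReal.toReal_mul, hb k, ha k, hγ k]
    have e1 : Real.exp (-(2 * p k * (t - τ)))
        = Real.exp (-(2 * (p k * (t - τ)))) := by ring_nf
    have e2 : Real.exp (-(2 * p k * (t + τ)))
        = Real.exp (-(2 * (p k * τ))) * (Real.exp (-(2 * (p k * τ)))
          * Real.exp (-(2 * (p k * (t - τ))))) := by
      rw [← Real.exp_add, ← Real.exp_add]; ring_nf
    rw [e1, e2]; ring
  have hfinite : ∀ n, ⟪(memS n).toLp _, (memT n).toLp _⟫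
      - ⟪(memS n).toLp _, o⟫ * ⟪(memT n).toLp _, o⟫
      = ∑ k ∈ Finset.range n, c k := by
    intro n
    rw [hST n, hfS1 n, hfT1 n, Finset.sum_mul_sum]
    simp_rw [← Finset.sum_sub_distrib]
    refine Finset.sum_congr rfl fun j hj => ?_
    rw [Finset.sum_eq_single j]
    · exact hdiag_c j
    · intro k _ hkj
      rw [hcrossAB j k (fun h => hkj h.symm), ENNReal.toReal_mul, sub_self]
    · intro h; exact absurd hj h
  have hc_sum : Summable c := by
    have h0 : ∀ k, 0 ≤ c k := by
      intro k
      simp only [hc_def]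
      have := Real.exp_le_exp.mpr (show -(2 * p k * (t + τ)) ≤ -(2 * p k * (t - τ))
        by nlinarith [(hp_pos k).le])
      linarith
    have hle : ∀ k, c k ≤ p k * t := by
      intro k
      simp only [hc_def]
      have e2 : Real.exp (-(2 * p k * (t + τ)))
          = Real.exp (-(2 * p k * (t - τ))) * Real.exp (-(4 * (p k * τ))) := by
        rw [← Real.exp_add]; ring_nf
      have hD1 : Real.exp (-(2 * p k * (t - τ))) ≤ 1 :=
        Real.exp_le_one_iff.mpr (by nlinarith [(hp_pos k).le])
      have hD0 := Real.exp_nonneg (-(2 * p k * (t - τ)))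
      have hF := Real.add_one_le_exp (-(4 * (p k * τ)))
      have hF0 := Real.exp_nonneg (-(4 * (p k * τ)))
      have hF1 : Real.exp (-(4 * (p k * τ))) ≤ 1 :=
        Real.exp_le_one_iff.mpr (by nlinarith [(hp_pos k).le])
      rw [e2]
      have key : Real.exp (-(2 * p k * (t - τ))) * (1 - Real.exp (-(4 * (p k * τ))))
          ≤ 1 * (1 - Real.exp (-(4 * (p k * τ)))) :=
        mul_le_mul_of_nonneg_right hD1 (by linarith)
      have hpt : p k * τ ≤ p k * t := mul_le_mul_of_nonneg_left hτt (hp_pos k).le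
      nlinarith [(hp_pos k).le, hτ.le]
    exact Summable.of_nonneg_of_le h0 hle hq_sum
  have hcsum_t : Tendsto (fun n => ∑ k ∈ Finset.range n, c k) atTop (𝓝 (∑' k, c k)) :=
    hc_sum.hasSum.tendsto_sum_nat
  have hkey_eq : ∫ ω, Uτ ω * Ut ω ∂P - (∫ ω, Uτ ω ∂P) * (∫ ω, Ut ω ∂P) = ∑' k, c k := by
    refine tendsto_nhds_unique ?_ hcsum_t
    rw [hinner_FAFB, hinner_FAo, hinner_FBo] at hlim
    exact hlim.congr hfinite
  -- integrability
  have hint_τ : Integrable Uτ P := memUτ.integrable one_le_two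
  have hint_t : Integrable Ut P := memUt.integrable one_le_two
  have hint_mul : Integrable (fun ω => Uτ ω * Ut ω) P := by
    refine (MeasureTheory.L2.integrable_inner (𝕜 := ℝ) FA FB).congr ?_
    filter_upwards [hUτFA, hUtFB] with ω h1 h2
    simp [RCLike.inner_apply, ← h1, ← h2, mul_comm]
  set m₁ := ∫ ω, Uτ ω ∂P with hm₁
  set m₂ := ∫ ω, Ut ω ∂P with hm₂
  have expand : ∫ ω, (Uτ ω - m₁) * (Ut ω - m₂) ∂P
      = (∫ ω, Uτ ω * Ut ω ∂P) - m₁ * m₂ := by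
    have hptw : ∀ ω, (Uτ ω - m₁) * (Ut ω - m₂)
        = Uτ ω * Ut ω - m₂ * Uτ ω - m₁ * Ut ω + m₁ * m₂ := fun ω => by ring
    simp_rw [hptw]
    have i1 : Integrable (fun ω => m₂ * Uτ ω) P := hint_τ.const_mul m₂
    have i1' : Integrable (fun ω => m₁ * Ut ω) P := hint_t.const_mul m₁
    have i2 : Integrable (fun ω => Uτ ω * Ut ω - m₂ * Uτ ω) P := hint_mul.sub i1
    have i3 : Integrable (fun ω => Uτ ω * Ut ω - m₂ * Uτ ω - m₁ * Ut ω) P := i2.sub i1'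
    rw [integral_add i3 (integrable_const _), integral_sub i2 i1', integral_sub hint_mul i1,
      integral_const_mul, integral_const_mul, integral_const]
    simp only [measure_univ, probReal_univ, ENNReal.toReal_one, smul_eq_mul, one_mul, ← hm₁, ← hm₂]
    ring
  rw [expand, hkey_eq]
  simp only [hc_def]
  exact tsum_mul_left
end

section
/- Let 0 < τ ≤ t, and let (X_k)_{k≥1} and (Y_k)_{k≥1} be ℕ-valued random variables, all mutually independent, with X_k Poisson-distributed with parameter p_k τ and Y_k Poisson-distributed with parameter p_k (t − τ). Set M_τ = Σ_{k≥1} τ p_k · 1{X_k = 0} and M_t = Σ_{k≥1} t p_k · 1{X_k + Y_k = 0} (both series converge absolutely a.s. and define square-integrable random variables). Then Cov(M_τ, M_t) = Σ_{k≥1} t τ p_k² e^{−t p_k} (1 − e^{−τ p_k}). -/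
open Filter Topology Real MeasureTheory ProbabilityTheory

/-- Covariance of the Poissonized scaled missing mass process at times `τ ≤ t`:
`Cov(M(τ), M(t)) = ∑_k t τ p_k² e^{−t p_k} (1 − e^{−τ p_k})`. -/
theorem covariance_missing_mass
    {Ω : Type*} [MeasurableSpace Ω] (P : Measure Ω) [IsProbabilityMeasure P]
    (p : ℕ → ℝ) (hp_pos : ∀ k, 0 < p k) (hp_sum : ∑' k, p k = 1)
    (τ t : ℝ) (hτ : 0 < τ) (hτt : τ ≤ t)
    (X Y : ℕ → Ω → ℕ) (hX_meas : ∀ k, Measurable (X k)) (hY_meas : ∀ k, Measurable (Y k))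
    (h_indep : iIndepFun (Sum.elim X Y) P)
    (hX : ∀ k, ∀ j : ℕ, (P {ω | X k ω = j}).toReal
      = Real.exp (-(p k * τ)) * (p k * τ) ^ j / j.factorial)
    (hY : ∀ k, ∀ j : ℕ, (P {ω | Y k ω = j}).toReal
      = Real.exp (-(p k * (t - τ))) * (p k * (t - τ)) ^ j / j.factorial)
    (Mτ Mt : Ω → ℝ)
    (hMτ : ∀ ω, Mτ ω = ∑' k, τ * p k * (if X k ω = 0 then (1 : ℝ) else 0))
    (hMt : ∀ ω, Mt ω = ∑' k, t * p k * (if X k ω + Y k ω = 0 then (1 : ℝ) else 0)) :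
    (∀ᵐ ω ∂P, Summable fun k => |τ * p k * (if X k ω = 0 then (1 : ℝ) else 0)|) ∧
    (∀ᵐ ω ∂P, Summable fun k => |t * p k * (if X k ω + Y k ω = 0 then (1 : ℝ) else 0)|) ∧
    MemLp Mτ 2 P ∧ MemLp Mt 2 P ∧
    (∫ ω, (Mτ ω - ∫ ω', Mτ ω' ∂P) * (Mt ω - ∫ ω', Mt ω' ∂P) ∂P)
      = ∑' k, t * τ * (p k) ^ 2 * Real.exp (-(t * p k))
          * (1 - Real.exp (-(τ * p k))) := by
  have ht : 0 < t := lt_of_lt_of_le hτ hτt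
  have hp_sm : Summable p := by
    by_contra h
    rw [tsum_eq_zero_of_not_summable h] at hp_sum
    norm_num at hp_sum
  -- the basic sets
  set A : ℕ → Set Ω := fun k => {ω | X k ω = 0} with hA_def
  set B : ℕ → Set Ω := fun k => {ω | Y k ω = 0} with hB_def
  have hAm : ∀ k, MeasurableSet (A k) := fun k => hX_meas k (measurableSet_singleton 0)
  have hBm : ∀ k, MeasurableSet (B k) := fun k => hY_meas k (measurableSet_singleton 0)
  -- the summand functions, as indicators
  set F : ℕ → Ω → ℝ := fun k => (A k).indicator (fun _ => τ * p k) with hF_def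
  set G : ℕ → Ω → ℝ := fun l => (A l ∩ B l).indicator (fun _ => t * p l) with hG_def
  have hFval : ∀ k ω, τ * p k * (if X k ω = 0 then (1 : ℝ) else 0) = F k ω := by
    intro k ω
    simp only [hF_def, Set.indicator_apply, hA_def, Set.mem_setOf_eq]
    split_ifs <;> ring
  have hGval : ∀ l ω, t * p l * (if X l ω + Y l ω = 0 then (1 : ℝ) else 0) = G l ω := by
    intro l ω
    simp only [hG_def, Set.indicator_apply, hA_def, hB_def, Set.mem_inter_iff,
      Set.mem_setOf_eq, ← Nat.add_eq_zero]
    split_ifs <;> ring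
  have hMτ' : ∀ ω, Mτ ω = ∑' k, F k ω := by
    intro ω; rw [hMτ ω]; exact tsum_congr fun k => hFval k ω
  have hMt' : ∀ ω, Mt ω = ∑' l, G l ω := by
    intro ω; rw [hMt ω]; exact tsum_congr fun l => hGval l ω
  -- bounds
  have hτp0 : ∀ k, 0 ≤ τ * p k := fun k => mul_nonneg hτ.le (hp_pos k).le
  have htp0 : ∀ k, 0 ≤ t * p k := fun k => mul_nonneg ht.le (hp_pos k).le
  have hF0 : ∀ k ω, 0 ≤ F k ω := fun k ω =>
    Set.indicator_nonneg (fun _ _ => hτp0 k) ω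
  have hG0 : ∀ l ω, 0 ≤ G l ω := fun l ω =>
    Set.indicator_nonneg (fun _ _ => htp0 l) ω
  have hFle : ∀ k ω, F k ω ≤ τ * p k := fun k ω =>
    Set.indicator_le_self' (fun _ _ => hτp0 k) ω
  have hGle : ∀ l ω, G l ω ≤ t * p l := fun l ω =>
    Set.indicator_le_self' (fun _ _ => htp0 l) ω
  have hFnorm : ∀ k ω, ‖F k ω‖ ≤ τ * p k := fun k ω => by
    rw [Real.norm_eq_abs, abs_of_nonneg (hF0 k ω)]; exact hFle k ω
  have hGnorm : ∀ l ω, ‖G l ω‖ ≤ t * p l := fun l ω => by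
    rw [Real.norm_eq_abs, abs_of_nonneg (hG0 l ω)]; exact hGle l ω
  have hτp : Summable fun k => τ * p k := hp_sm.mul_left τ
  have htp : Summable fun l => t * p l := hp_sm.mul_left t
  have hFsum : ∀ ω, Summable fun k => F k ω := fun ω =>
    Summable.of_nonneg_of_le (fun k => hF0 k ω) (fun k => hFle k ω) hτp
  have hGsum : ∀ ω, Summable fun l => G l ω := fun ω =>
    Summable.of_nonneg_of_le (fun l => hG0 l ω) (fun l => hGle l ω) htp
  have hFnsum : ∀ ω, Summable fun k => ‖F k ω‖ := fun ω =>
    Summable.of_nonneg_of_le (fun k => norm_nonneg _) (fun k => hFnorm k ω) hτp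
  have hGnsum : ∀ ω, Summable fun l => ‖G l ω‖ := fun ω =>
    Summable.of_nonneg_of_le (fun l => norm_nonneg _) (fun l => hGnorm l ω) htp
  -- measurability
  have hFm : ∀ k, Measurable (F k) := fun k => measurable_const.indicator (hAm k)
  have hGm : ∀ l, Measurable (G l) := fun l =>
    measurable_const.indicator ((hAm l).inter (hBm l))
  have hMτm : Measurable Mτ := by
    have hrepr : Mτ = fun ω => (∑' k, ENNReal.ofReal (F k ω)).toReal := by
      funext ω
      rw [hMτ' ω, ← ENNReal.ofReal_tsum_of_nonneg (fun k => hF0 k ω) (hFsum ω),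
        ENNReal.toReal_ofReal (tsum_nonneg fun k => hF0 k ω)]
    rw [hrepr]
    exact (Measurable.ennreal_tsum fun k => (hFm k).ennreal_ofReal).ennreal_toReal
  have hMtm : Measurable Mt := by
    have hrepr : Mt = fun ω => (∑' l, ENNReal.ofReal (G l ω)).toReal := by
      funext ω
      rw [hMt' ω, ← ENNReal.ofReal_tsum_of_nonneg (fun l => hG0 l ω) (hGsum ω),
        ENNReal.toReal_ofReal (tsum_nonneg fun l => hG0 l ω)]
    rw [hrepr]
    exact (Measurable.ennreal_tsum fun l => (hGm l).ennreal_ofReal).ennreal_toReal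
  -- uniform bounds on Mτ, Mt
  have hMτbd : ∀ ω, ‖Mτ ω‖ ≤ τ := by
    intro ω
    rw [hMτ' ω, Real.norm_eq_abs, abs_of_nonneg (tsum_nonneg fun k => hF0 k ω)]
    calc ∑' k, F k ω ≤ ∑' k, τ * p k :=
          Summable.tsum_le_tsum (fun k => hFle k ω) (hFsum ω) hτp
      _ = τ := by rw [tsum_mul_left, hp_sum, mul_one]
  have hMtbd : ∀ ω, ‖Mt ω‖ ≤ t := by
    intro ω
    rw [hMt' ω, Real.norm_eq_abs, abs_of_nonneg (tsum_nonneg fun l => hG0 l ω)]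
    calc ∑' l, G l ω ≤ ∑' l, t * p l :=
          Summable.tsum_le_tsum (fun l => hGle l ω) (hGsum ω) htp
      _ = t := by rw [tsum_mul_left, hp_sum, mul_one]
  have hMτ2 : MemLp Mτ 2 P :=
    (memLp_top_of_bound hMτm.aestronglyMeasurable τ
      (Filter.Eventually.of_forall hMτbd)).mono_exponent le_top
  have hMt2 : MemLp Mt 2 P :=
    (memLp_top_of_bound hMtm.aestronglyMeasurable t
      (Filter.Eventually.of_forall hMtbd)).mono_exponent le_top
  refine ⟨Filter.Eventually.of_forall fun ω => ?_,
    Filter.Eventually.of_forall fun ω => ?_, hMτ2, hMt2, ?_⟩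
  · have := hFnsum ω
    simp only [Real.norm_eq_abs] at this
    exact this.congr fun k => by rw [hFval k ω]
  · have := hGnsum ω
    simp only [Real.norm_eq_abs] at this
    exact this.congr fun l => by rw [hGval l ω]
  -- main covariance computation
  -- probabilities
  have ha : ∀ k, (P (A k)).toReal = Real.exp (-(τ * p k)) := by
    intro k
    have h := hX k 0
    simp only [pow_zero, Nat.factorial_zero, Nat.cast_one, mul_one, div_one] at h
    rw [hA_def]
    rw [mul_comm τ (p k)]
    exact h
  have hb : ∀ l, (P (B l)).toReal = Real.exp (-((t - τ) * p l)) := by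
    intro l
    have h := hY l 0
    simp only [pow_zero, Nat.factorial_zero, Nat.cast_one, mul_one, div_one] at h
    rw [hB_def]
    rw [mul_comm (t - τ) (p l)]
    exact h
  have hexp : ∀ k, Real.exp (-(τ * p k)) * Real.exp (-((t - τ) * p k))
      = Real.exp (-(t * p k)) := by
    intro k; rw [← Real.exp_add]; congr 1; ring
  -- independence consequences
  have key2 : ∀ l, P (A l ∩ B l) = P (A l) * P (B l) := by
    intro l
    have h := h_indep.measure_inter_preimage_eq_mul
      ({Sum.inl l, Sum.inr l} : Finset (ℕ ⊕ ℕ))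
      (sets := fun _ => ({0} : Set ℕ)) (fun i _ => measurableSet_singleton 0)
    simp [Finset.set_biInter_insert, Finset.prod_insert] at h
    exact h
  have key3 : ∀ k l, k ≠ l →
      P (A k ∩ (A l ∩ B l)) = P (A k) * (P (A l) * P (B l)) := by
    intro k l hkl
    have h := h_indep.measure_inter_preimage_eq_mul
      ({Sum.inl k, Sum.inl l, Sum.inr l} : Finset (ℕ ⊕ ℕ))
      (sets := fun _ => ({0} : Set ℕ)) (fun i _ => measurableSet_singleton 0)
    simp [Finset.set_biInter_insert, Finset.prod_insert, hkl] at h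
    exact h
  -- the expected values of the summands
  set d : ℕ → ℝ := fun k => τ * p k * Real.exp (-(τ * p k)) with hd_def
  set e : ℕ → ℝ := fun l => t * p l * Real.exp (-(t * p l)) with he_def
  set r : ℕ → ℝ := fun k => t * τ * (p k) ^ 2 * Real.exp (-(t * p k))
      * (1 - Real.exp (-(τ * p k))) with hr_def
  have hintF : ∀ k, ∫ ω, F k ω ∂P = d k := by
    intro k
    rw [hF_def]
    rw [integral_indicator_const _ (hAm k), smul_eq_mul, measureReal_def, ha k, hd_def]
    ring
  have hABv : ∀ l, (P (A l ∩ B l)).toReal = Real.exp (-(t * p l)) := by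
    intro l
    rw [key2 l, ENNReal.toReal_mul, ha l, hb l, hexp l]
  have hintG : ∀ l, ∫ ω, G l ω ∂P = e l := by
    intro l
    rw [hG_def]
    rw [integral_indicator_const _ ((hAm l).inter (hBm l)), smul_eq_mul, measureReal_def, hABv l, he_def]
    ring
  -- product of summands
  have hFG : ∀ k l, (fun ω => F k ω * G l ω)
      = (A k ∩ (A l ∩ B l)).indicator (fun _ => τ * p k * (t * p l)) := by
    intro k l
    funext ω
    rw [hF_def, hG_def, ← Set.inter_indicator_mul]
  have hintFG : ∀ z : ℕ × ℕ, ∫ ω, F z.1 ω * G z.2 ω ∂P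
      = d z.1 * e z.2 + (if z.1 = z.2 then r z.1 else 0) := by
    rintro ⟨k, l⟩
    dsimp only
    have hm : MeasurableSet (A k ∩ (A l ∩ B l)) :=
      (hAm k).inter ((hAm l).inter (hBm l))
    rw [show (fun ω => F k ω * G l ω) = fun ω =>
      (A k ∩ (A l ∩ B l)).indicator (fun _ => τ * p k * (t * p l)) ω from hFG k l]
    rw [integral_indicator_const _ hm, smul_eq_mul]
    by_cases hkl : k = l
    · subst hkl
      rw [if_pos rfl]
      rw [show A k ∩ (A k ∩ B k) = A k ∩ B k by rw [← Set.inter_assoc, Set.inter_self]]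
      rw [measureReal_def, hABv k]
      simp only [hd_def, he_def, hr_def]
      ring
    · rw [if_neg hkl, add_zero]
      rw [measureReal_def, key3 k l hkl, ENNReal.toReal_mul, ENNReal.toReal_mul, ha k, ha l, hb l]
      simp only [hd_def, he_def]
      linear_combination (τ * p k * (t * p l) * Real.exp (-(τ * p k))) * hexp l
  -- summabilities of d, e, r
  have hexp_le_one : ∀ (x : ℝ), 0 ≤ x → Real.exp (-x) ≤ 1 := fun x hx => by
    rw [Real.exp_le_one_iff]; linarith
  have hd_sm : Summable d := by
    apply Summable.of_nonneg_of_le (fun k =>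
      mul_nonneg (hτp0 k) (Real.exp_pos _).le) _ hτp
    intro k
    show τ * p k * Real.exp (-(τ * p k)) ≤ τ * p k
    have h1 : Real.exp (-(τ * p k)) ≤ 1 := hexp_le_one _ (hτp0 k)
    have h2 := (Real.exp_pos (-(τ * p k))).le
    have h3 := hτp0 k
    nlinarith
  have he_sm : Summable e := by
    apply Summable.of_nonneg_of_le (fun l =>
      mul_nonneg (htp0 l) (Real.exp_pos _).le) _ htp
    intro l
    show t * p l * Real.exp (-(t * p l)) ≤ t * p l
    have h1 : Real.exp (-(t * p l)) ≤ 1 := hexp_le_one _ (htp0 l)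
    have h2 := (Real.exp_pos (-(t * p l))).le
    have h3 := htp0 l
    nlinarith
  have hp1 : ∀ k, p k ≤ 1 := by
    intro k
    rw [← hp_sum]
    exact Summable.le_tsum hp_sm k fun j _ => (hp_pos j).le
  have hr_sm : Summable r := by
    apply Summable.of_nonneg_of_le _ _ ((hp_sm.mul_left (t * τ)))
    · intro k
      show (0:ℝ) ≤ t * τ * (p k) ^ 2 * Real.exp (-(t * p k)) * (1 - Real.exp (-(τ * p k)))
      have h1 : Real.exp (-(τ * p k)) ≤ 1 := hexp_le_one _ (hτp0 k)
      have h2 := (Real.exp_pos (-(t * p k))).le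
      have h3 : (0:ℝ) ≤ 1 - Real.exp (-(τ * p k)) := by linarith
      have h4 : (0:ℝ) ≤ t * τ * (p k) ^ 2 :=
        mul_nonneg (mul_nonneg ht.le hτ.le) (sq_nonneg (p k))
      nlinarith [mul_nonneg (mul_nonneg h4 h2) h3]
    · intro k
      show t * τ * (p k) ^ 2 * Real.exp (-(t * p k)) * (1 - Real.exp (-(τ * p k))) ≤ t * τ * p k
      have h1 : Real.exp (-(τ * p k)) ≤ 1 := hexp_le_one _ (hτp0 k)
      have h2 : Real.exp (-(t * p k)) ≤ 1 := hexp_le_one _ (htp0 k)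
      have h3 := (Real.exp_pos (-(τ * p k))).le
      have h4 := (Real.exp_pos (-(t * p k))).le
      have h5 := hp_pos k
      have h6 := hp1 k
      have h7 := mul_nonneg ht.le hτ.le
      have hfac : Real.exp (-(t * p k)) * (1 - Real.exp (-(τ * p k))) ≤ 1 := by nlinarith
      have hfac0 : 0 ≤ Real.exp (-(t * p k)) * (1 - Real.exp (-(τ * p k))) := by nlinarith
      have hbase : (0:ℝ) ≤ t * τ * p k ^ 2 := mul_nonneg h7 (sq_nonneg _)
      calc t * τ * (p k) ^ 2 * Real.exp (-(t * p k)) * (1 - Real.exp (-(τ * p k)))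
          = t * τ * p k ^ 2 * (Real.exp (-(t * p k)) * (1 - Real.exp (-(τ * p k)))) := by ring
        _ ≤ t * τ * p k ^ 2 * 1 := mul_le_mul_of_nonneg_left hfac hbase
        _ = t * τ * (p k * p k) := by ring
        _ ≤ t * τ * (1 * p k) := by
            apply mul_le_mul_of_nonneg_left _ h7
            nlinarith
        _ = t * τ * p k := by ring
  -- the expectations
  have hEτ : ∫ ω, Mτ ω ∂P = ∑' k, d k := by
    have h1 : ∫ ω, Mτ ω ∂P = ∫ ω, ∑' k, F k ω ∂P := by
      congr 1; funext ω; exact hMτ' ω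
    rw [h1, integral_tsum (fun k => (hFm k).aestronglyMeasurable) ?_]
    · exact tsum_congr hintF
    · have hb1 : ∀ k, ∫⁻ ω, ‖F k ω‖₊ ∂P ≤ ENNReal.ofReal (τ * p k) := by
        intro k
        calc ∫⁻ ω, ‖F k ω‖₊ ∂P ≤ ∫⁻ _, ENNReal.ofReal (τ * p k) ∂P := by
              apply lintegral_mono
              intro ω
              dsimp only
              rw [← enorm_eq_nnnorm, ← ofReal_norm]
              exact ENNReal.ofReal_le_ofReal (hFnorm k ω)
          _ = ENNReal.ofReal (τ * p k) := by
              rw [lintegral_const, measure_univ, mul_one]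
      refine ne_of_lt (lt_of_le_of_lt (ENNReal.tsum_le_tsum hb1) ?_)
      rw [← ENNReal.ofReal_tsum_of_nonneg hτp0 hτp]
      exact ENNReal.ofReal_lt_top
  have hEt : ∫ ω, Mt ω ∂P = ∑' l, e l := by
    have h1 : ∫ ω, Mt ω ∂P = ∫ ω, ∑' l, G l ω ∂P := by
      congr 1; funext ω; exact hMt' ω
    rw [h1, integral_tsum (fun l => (hGm l).aestronglyMeasurable) ?_]
    · exact tsum_congr hintG
    · have hb1 : ∀ l, ∫⁻ ω, ‖G l ω‖₊ ∂P ≤ ENNReal.ofReal (t * p l) := by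
        intro l
        calc ∫⁻ ω, ‖G l ω‖₊ ∂P ≤ ∫⁻ _, ENNReal.ofReal (t * p l) ∂P := by
              apply lintegral_mono
              intro ω
              dsimp only
              rw [← enorm_eq_nnnorm, ← ofReal_norm]
              exact ENNReal.ofReal_le_ofReal (hGnorm l ω)
          _ = ENNReal.ofReal (t * p l) := by
              rw [lintegral_const, measure_univ, mul_one]
      refine ne_of_lt (lt_of_le_of_lt (ENNReal.tsum_le_tsum hb1) ?_)
      rw [← ENNReal.ofReal_tsum_of_nonneg htp0 htp]
      exact ENNReal.ofReal_lt_top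
  -- expectation of the product
  have hEprod : ∫ ω, Mτ ω * Mt ω ∂P
      = ∑' z : ℕ × ℕ, (d z.1 * e z.2 + (if z.1 = z.2 then r z.1 else 0)) := by
    have h1 : ∫ ω, Mτ ω * Mt ω ∂P = ∫ ω, ∑' z : ℕ × ℕ, F z.1 ω * G z.2 ω ∂P := by
      congr 1; funext ω
      rw [hMτ' ω, hMt' ω]
      exact tsum_mul_tsum_of_summable_norm (hFnsum ω) (hGnsum ω)
    have hbound : ∑' z : ℕ × ℕ, ∫⁻ ω, ‖F z.1 ω * G z.2 ω‖₊ ∂P ≠ ⊤ := by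
      have hb1 : ∀ z : ℕ × ℕ, ∫⁻ ω, ‖F z.1 ω * G z.2 ω‖₊ ∂P
          ≤ ENNReal.ofReal (τ * p z.1) * ENNReal.ofReal (t * p z.2) := by
        rintro ⟨k, l⟩
        calc ∫⁻ ω, ‖F k ω * G l ω‖₊ ∂P
            ≤ ∫⁻ _, ENNReal.ofReal (τ * p k) * ENNReal.ofReal (t * p l) ∂P := by
              apply lintegral_mono
              intro ω
              dsimp only
              rw [nnnorm_mul, ENNReal.coe_mul]
              exact mul_le_mul' (by rw [← enorm_eq_nnnorm, ← ofReal_norm]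
                                    exact ENNReal.ofReal_le_ofReal (hFnorm k ω))
                (by rw [← enorm_eq_nnnorm, ← ofReal_norm]
                    exact ENNReal.ofReal_le_ofReal (hGnorm l ω))
          _ = ENNReal.ofReal (τ * p k) * ENNReal.ofReal (t * p l) := by
              rw [lintegral_const, measure_univ, mul_one]
      refine ne_of_lt (lt_of_le_of_lt (ENNReal.tsum_le_tsum hb1) ?_)
      have heq : ∑' z : ℕ × ℕ, ENNReal.ofReal (τ * p z.1) * ENNReal.ofReal (t * p z.2)
          = (∑' k, ENNReal.ofReal (τ * p k)) * ∑' l, ENNReal.ofReal (t * p l) := by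
        rw [ENNReal.tsum_prod']
        simp_rw [ENNReal.tsum_mul_left, ENNReal.tsum_mul_right]
      rw [heq, ← ENNReal.ofReal_tsum_of_nonneg hτp0 hτp,
        ← ENNReal.ofReal_tsum_of_nonneg htp0 htp]
      exact ENNReal.mul_lt_top ENNReal.ofReal_lt_top ENNReal.ofReal_lt_top
    have h2 : ∫ ω, ∑' z : ℕ × ℕ, F z.1 ω * G z.2 ω ∂P
        = ∑' z : ℕ × ℕ, ∫ ω, F z.1 ω * G z.2 ω ∂P :=
      integral_tsum (fun z => ((hFm z.1).mul (hGm z.2)).aestronglyMeasurable) hbound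
    rw [h1, h2]
    exact tsum_congr hintFG
  -- split the double sum
  have hsm1 : Summable fun z : ℕ × ℕ => d z.1 * e z.2 := by
    have := summable_mul_of_summable_norm (f := d) (g := e) ?_ ?_
    · exact this
    · simpa [Real.norm_eq_abs] using hd_sm.abs
    · simpa [Real.norm_eq_abs] using he_sm.abs
  have hdiag_inj : Function.Injective (fun k : ℕ => ((k, k) : ℕ × ℕ)) := by
    intro a b h
    simpa using congrArg Prod.fst h
  have hzero : ∀ z : ℕ × ℕ, z ∉ Set.range (fun k : ℕ => ((k, k) : ℕ × ℕ)) →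
      (if z.1 = z.2 then r z.1 else 0) = 0 := by
    rintro ⟨k, l⟩ hz
    dsimp only
    rw [if_neg]
    intro h
    exact hz ⟨k, by rw [h]⟩
  have hdiag_supp : Function.support (fun z : ℕ × ℕ => if z.1 = z.2 then r z.1 else 0)
      ⊆ Set.range (fun k : ℕ => ((k, k) : ℕ × ℕ)) := by
    intro z hz
    by_contra h
    exact hz (hzero z h)
  have hcomp : ((fun z : ℕ × ℕ => if z.1 = z.2 then r z.1 else 0) ∘ fun k : ℕ => ((k, k) : ℕ × ℕ))
      = r := by
    funext k
    simp [Function.comp]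
  have hsm2 : Summable fun z : ℕ × ℕ => if z.1 = z.2 then r z.1 else 0 := by
    apply (Function.Injective.summable_iff hdiag_inj hzero).mp
    rw [hcomp]
    exact hr_sm
  have hdiag_tsum : ∑' z : ℕ × ℕ, (if z.1 = z.2 then r z.1 else 0) = ∑' k, r k := by
    rw [← Function.Injective.tsum_eq hdiag_inj hdiag_supp]
    rw [show (fun k : ℕ => if ((k, k) : ℕ × ℕ).1 = ((k, k) : ℕ × ℕ).2 then r ((k,k) : ℕ × ℕ).1 else 0) = r from hcomp]
  have hde_tsum : ∑' z : ℕ × ℕ, d z.1 * e z.2 = (∑' k, d k) * ∑' l, e l := by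
    refine (tsum_mul_tsum_of_summable_norm ?_ ?_).symm
    · simpa [Real.norm_eq_abs] using hd_sm.abs
    · simpa [Real.norm_eq_abs] using he_sm.abs
  -- integrability
  have hMτ_int : Integrable Mτ P := hMτ2.integrable one_le_two
  have hMt_int : Integrable Mt P := hMt2.integrable one_le_two
  have hprod_int : Integrable (fun ω => Mτ ω * Mt ω) P := by
    refine MemLp.integrable le_top (memLp_top_of_bound
      (hMτm.mul hMtm).aestronglyMeasurable (τ * t)
      (Filter.Eventually.of_forall fun ω => ?_))
    rw [norm_mul]
    exact mul_le_mul (hMτbd ω) (hMtbd ω) (norm_nonneg _) hτ.le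
  -- expand covariance
  set a : ℝ := ∫ ω', Mτ ω' ∂P with ha_def
  set b : ℝ := ∫ ω', Mt ω' ∂P with hb_def2
  have i4 : Integrable (fun ω => a * Mt ω) P := hMt_int.const_mul a
  have i5 : Integrable (fun ω => Mτ ω * b) P := hMτ_int.mul_const b
  have i2 : Integrable (fun ω => Mτ ω * Mt ω - a * Mt ω) P := hprod_int.sub i4
  have i3 : Integrable (fun ω => Mτ ω * Mt ω - a * Mt ω - Mτ ω * b) P := i2.sub i5
  have hcov : ∫ ω, (Mτ ω - a) * (Mt ω - b) ∂P = (∫ ω, Mτ ω * Mt ω ∂P) - a * b := by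
    have hexpand : (fun ω => (Mτ ω - a) * (Mt ω - b))
        = fun ω => Mτ ω * Mt ω - a * Mt ω - Mτ ω * b + a * b := by
      funext ω; ring
    have e1 : ∫ ω, (Mτ ω * Mt ω - a * Mt ω - Mτ ω * b) + a * b ∂P
        = (∫ ω, Mτ ω * Mt ω - a * Mt ω - Mτ ω * b ∂P) + ∫ _, a * b ∂P :=
      integral_add i3 (integrable_const _)
    have e2 : ∫ ω, Mτ ω * Mt ω - a * Mt ω - Mτ ω * b ∂P
        = (∫ ω, Mτ ω * Mt ω - a * Mt ω ∂P) - ∫ ω, Mτ ω * b ∂P :=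
      integral_sub i2 i5
    have e3 : ∫ ω, Mτ ω * Mt ω - a * Mt ω ∂P
        = (∫ ω, Mτ ω * Mt ω ∂P) - ∫ ω, a * Mt ω ∂P :=
      integral_sub hprod_int i4
    have e4 : ∫ ω, a * Mt ω ∂P = a * b := by
      rw [integral_const_mul, ← hb_def2]
    have e5 : ∫ ω, Mτ ω * b ∂P = a * b := by
      rw [integral_mul_const, ← ha_def]
    have e6 : ∫ _ : Ω, a * b ∂P = a * b := by
      rw [integral_const]
      simp [measure_univ]
    rw [hexpand, e1, e2, e3, e4, e5, e6]
    ring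
  have ha' : a = ∑' k, d k := ha_def.trans hEτ
  have hb' : b = ∑' l, e l := hb_def2.trans hEt
  rw [hcov, hEprod, Summable.tsum_add hsm1 hsm2, hde_tsum, hdiag_tsum, ha', hb']
  simp only [hr_def]
  ring
end

section
/- Let 0 < τ ≤ t, and let (X_k)_{k≥1} and (Y_k)_{k≥1} be ℕ-valued random variables, all mutually independent, with X_k Poisson-distributed with parameter p_k τ and Y_k Poisson-distributed with parameter p_k (t − τ). Set R_τ = Σ_{k≥1} 1{X_k ≥ 1}, R_t = Σ_{k≥1} 1{X_k + Y_k ≥ 1}, U_τ = Σ_{k≥1} 1{X_k is odd}, U_t = Σ_{k≥1} 1{X_k + Y_k is odd} (all series converge a.s. and define square-integrable random variables). Then Cov(R_τ, U_t) = (1/2) Σ_{k≥1} ( e^{−p_k (2t − τ)} − e^{−p_k (2t + τ)} ) and Cov(R_t, U_τ) = (1/2) Σ_{k≥1} ( e^{−p_k t} − e^{−p_k (2τ + t)} ). -/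
open Filter Topology Real MeasureTheory ProbabilityTheory
open scoped ENNReal Classical
set_option linter.unusedSectionVars false
set_option maxHeartbeats 1000000

namespace CovOcc
variable {Ω : Type*} [MeasurableSpace Ω] {P : Measure Ω} [IsProbabilityMeasure P]


variable {Ω : Type*} [MeasurableSpace Ω] {P : Measure Ω} [IsProbabilityMeasure P]

lemma ind_mul (A B : Set Ω) (ω : Ω) :
    (A.indicator (1 : Ω → ℝ≥0∞) ω) * (B.indicator 1 ω) = (A ∩ B).indicator 1 ω := by
  by_cases hA : ω ∈ A <;> by_cases hB : ω ∈ B <;>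
    simp [Set.indicator_apply, hA, hB, Set.mem_inter_iff]

lemma meas_F {A : ℕ → Set Ω} (hA : ∀ k, MeasurableSet (A k)) :
    Measurable (fun ω => ∑' k, (A k).indicator (1 : Ω → ℝ≥0∞) ω) :=
  Measurable.ennreal_tsum fun k => measurable_one.indicator (hA k)

lemma lint_F {A : ℕ → Set Ω} (hA : ∀ k, MeasurableSet (A k)) :
    ∫⁻ ω, (∑' k, (A k).indicator (1 : Ω → ℝ≥0∞) ω) ∂P = ∑' k, P (A k) := by
  rw [lintegral_tsum fun k => (measurable_one.indicator (hA k)).aemeasurable]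
  simp_rw [lintegral_indicator_one (hA _)]

lemma F_mul (A B : ℕ → Set Ω) (ω : Ω) :
    (∑' k, (A k).indicator (1 : Ω → ℝ≥0∞) ω) * (∑' k, (B k).indicator (1 : Ω → ℝ≥0∞) ω)
      = ∑' q : ℕ × ℕ, ((A q.1 ∩ B q.2).indicator (1 : Ω → ℝ≥0∞) ω) := by
  rw [ENNReal.tsum_prod', ← ENNReal.tsum_mul_right]
  refine tsum_congr fun k => ?_
  rw [← ENNReal.tsum_mul_left]
  exact tsum_congr fun j => ind_mul _ _ _

lemma lint_FG {A B : ℕ → Set Ω} (hA : ∀ k, MeasurableSet (A k))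
    (hB : ∀ k, MeasurableSet (B k)) :
    ∫⁻ ω, (∑' k, (A k).indicator (1 : Ω → ℝ≥0∞) ω)
        * (∑' k, (B k).indicator (1 : Ω → ℝ≥0∞) ω) ∂P
      = ∑' q : ℕ × ℕ, P (A q.1 ∩ B q.2) := by
  simp_rw [F_mul]
  rw [lintegral_tsum (fun q : ℕ × ℕ => (measurable_one.indicator ((hA q.1).inter (hB q.2))).aemeasurable)]
  simp_rw [lintegral_indicator_one ((hA _).inter (hB _))]

lemma pairsum_ne_top {A B : ℕ → Set Ω}
    (hAB : ∀ k j, k ≠ j → P (A k ∩ B j) = P (A k) * P (B j))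
    (hAfin : ∑' k, P (A k) ≠ ∞) (hBfin : ∑' k, P (B k) ≠ ∞) :
    ∑' q : ℕ × ℕ, P (A q.1 ∩ B q.2) ≠ ∞ := by
  have hle : ∀ q : ℕ × ℕ, P (A q.1 ∩ B q.2)
      ≤ P (A q.1) * P (B q.2) + (if q.1 = q.2 then P (B q.1) else 0) := by
    rintro ⟨k, j⟩
    by_cases h : k = j
    · subst h
      simp only [if_pos rfl]
      exact le_add_left (measure_mono Set.inter_subset_right)
    · rw [hAB k j h]; simp [h]
  refine ne_top_of_le_ne_top ?_ (ENNReal.tsum_le_tsum hle)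
  rw [ENNReal.tsum_add]
  have h1 : ∑' q : ℕ × ℕ, P (A q.1) * P (B q.2) = (∑' k, P (A k)) * ∑' k, P (B k) := by
    rw [ENNReal.tsum_prod']
    simp_rw [ENNReal.tsum_mul_left]
    rw [ENNReal.tsum_mul_right]
  have h2 : ∑' q : ℕ × ℕ, (if q.1 = q.2 then P (B q.1) else 0) = ∑' k, P (B k) := by
    rw [ENNReal.tsum_prod']
    refine tsum_congr fun k => ?_
    exact (tsum_eq_single k (fun j hj => if_neg fun h => hj h.symm)).trans (if_pos rfl)
  rw [h1, h2]
  exact ENNReal.add_ne_top.2 ⟨ENNReal.mul_ne_top hAfin hBfin, hBfin⟩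

lemma toReal_F (A : ℕ → Set Ω) (ω : Ω) :
    (∑' k, (A k).indicator (1 : Ω → ℝ≥0∞) ω).toReal
      = ∑' k, (A k).indicator (fun _ => (1 : ℝ)) ω := by
  rw [ENNReal.tsum_toReal_eq (fun k => by
    by_cases h : ω ∈ A k <;> simp [Set.indicator_apply, h])]
  exact tsum_congr fun k => by by_cases h : ω ∈ A k <;> simp [Set.indicator_apply, h]


variable {Ω : Type*} [MeasurableSpace Ω] {P : Measure Ω} [IsProbabilityMeasure P]

lemma meas_event (Z : Ω → ℕ) (hZ : Measurable Z) (Q : ℕ → Prop) :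
    P {ω | Q (Z ω)} = ∑' j : ℕ, if Q j then P {ω | Z ω = j} else 0 := by
  have hset : {ω | Q (Z ω)} = ⋃ j : ℕ, {ω | Z ω = j ∧ Q j} := by
    ext ω
    simp only [Set.mem_setOf_eq, Set.mem_iUnion]
    exact ⟨fun h => ⟨Z ω, rfl, h⟩, fun ⟨j, hj, hQ⟩ => hj ▸ hQ⟩
  have hmeas : ∀ j : ℕ, MeasurableSet {ω | Z ω = j ∧ Q j} := by
    intro j
    by_cases hq : Q j
    · have : {ω | Z ω = j ∧ Q j} = Z ⁻¹' {j} := by ext ω; simp [hq]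
      rw [this]; exact hZ (measurableSet_singleton j)
    · have : {ω | Z ω = j ∧ Q j} = ∅ := by ext ω; simp [hq]
      rw [this]; exact MeasurableSet.empty
  have hdis : Pairwise (Function.onFun Disjoint fun j : ℕ => {ω | Z ω = j ∧ Q j}) := by
    intro i j hij
    refine Set.disjoint_left.2 ?_
    rintro ω ⟨h1, -⟩ ⟨h2, -⟩
    exact hij (h1 ▸ h2 ▸ rfl)
  rw [hset, measure_iUnion hdis hmeas]
  refine tsum_congr fun j => ?_
  by_cases hq : Q j
  · rw [if_pos hq]; congr 1; ext ω; simp [hq]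
  · rw [if_neg hq]
    have : {ω | Z ω = j ∧ Q j} = ∅ := by ext ω; simp [hq]
    rw [this, measure_empty]

lemma meas_event_toReal (Z : Ω → ℕ) (hZ : Measurable Z) (Q : ℕ → Prop) :
    (P {ω | Q (Z ω)}).toReal = ∑' j : ℕ, if Q j then (P {ω | Z ω = j}).toReal else 0 := by
  rw [meas_event Z hZ Q, ENNReal.tsum_toReal_eq (fun j => by split <;> simp [measure_ne_top])]
  exact tsum_congr fun j => by split <;> simp

lemma meas_event2 (Z W : Ω → ℕ) (hZ : Measurable Z) (hW : Measurable W) (Q : ℕ → ℕ → Prop) :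
    P {ω | Q (Z ω) (W ω)}
      = ∑' q : ℕ × ℕ, if Q q.1 q.2 then P ({ω | Z ω = q.1} ∩ {ω | W ω = q.2}) else 0 := by
  have hset : {ω | Q (Z ω) (W ω)} = ⋃ q : ℕ × ℕ, {ω | (Z ω, W ω) = q ∧ Q q.1 q.2} := by
    ext ω
    simp only [Set.mem_setOf_eq, Set.mem_iUnion]
    refine ⟨fun h => ⟨(Z ω, W ω), rfl, h⟩, ?_⟩
    rintro ⟨q, hq, hQ⟩
    rw [← hq] at hQ; exact hQ
  have hkey : ∀ q : ℕ × ℕ, {ω | (Z ω, W ω) = q ∧ Q q.1 q.2}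
      = if Q q.1 q.2 then ({ω | Z ω = q.1} ∩ {ω | W ω = q.2}) else ∅ := by
    intro q
    by_cases hq : Q q.1 q.2
    · rw [if_pos hq]; ext ω
      simp [Prod.ext_iff, hq, Set.mem_inter_iff]
    · rw [if_neg hq]; ext ω; simp [hq]
  have hmeas : ∀ q : ℕ × ℕ, MeasurableSet {ω | (Z ω, W ω) = q ∧ Q q.1 q.2} := by
    intro q
    rw [hkey q]
    split
    · exact (hZ (measurableSet_singleton q.1)).inter (hW (measurableSet_singleton q.2))
    · exact MeasurableSet.empty
  have hdis : Pairwise (Function.onFun Disjoint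
      fun q : ℕ × ℕ => {ω | (Z ω, W ω) = q ∧ Q q.1 q.2}) := by
    intro i j hij
    refine Set.disjoint_left.2 ?_
    rintro ω ⟨h1, -⟩ ⟨h2, -⟩
    exact hij (h1 ▸ h2 ▸ rfl)
  rw [hset, measure_iUnion hdis hmeas]
  refine tsum_congr fun q => ?_
  rw [hkey q]
  split
  · rfl
  · exact measure_empty

lemma meas_event2_toReal (Z W : Ω → ℕ) (hZ : Measurable Z) (hW : Measurable W)
    (hind : IndepFun Z W P) (Q : ℕ → ℕ → Prop) :
    (P {ω | Q (Z ω) (W ω)}).toReal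
      = ∑' q : ℕ × ℕ, if Q q.1 q.2
          then (P {ω | Z ω = q.1}).toReal * (P {ω | W ω = q.2}).toReal else 0 := by
  rw [meas_event2 Z W hZ hW Q,
    ENNReal.tsum_toReal_eq (fun q => by split <;> simp [measure_ne_top])]
  refine tsum_congr fun q => ?_
  split
  · have : {ω | Z ω = q.1} ∩ {ω | W ω = q.2} = Z ⁻¹' {q.1} ∩ W ⁻¹' {q.2} := rfl
    rw [this, hind.measure_inter_preimage_eq_mul _ _ (measurableSet_singleton _)
      (measurableSet_singleton _), ENNReal.toReal_mul]
    rfl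
  · simp

/-- exp series facts -/
lemma tsum_pmf (c x : ℝ) : ∑' j : ℕ, c * x ^ j / (j.factorial : ℝ) = c * Real.exp x := by
  have hexp : ∑' j : ℕ, x ^ j / (j.factorial : ℝ) = Real.exp x := by
    rw [Real.exp_eq_exp_ℝ, NormedSpace.exp_eq_tsum_div]
  simp_rw [mul_div_assoc]
  rw [tsum_mul_left, hexp]

lemma summable_pmf (c x : ℝ) : Summable (fun j : ℕ => c * x ^ j / (j.factorial : ℝ)) := by
  simp_rw [mul_div_assoc]
  exact (Real.summable_pow_div_factorial x).mul_left c

lemma summable_norm_pmf (c x : ℝ) : Summable (fun j : ℕ => ‖c * x ^ j / (j.factorial : ℝ)‖) := by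
  have h : ∀ j : ℕ, ‖c * x ^ j / (j.factorial : ℝ)‖ = |c| * |x| ^ j / (j.factorial : ℝ) := by
    intro j
    rw [Real.norm_eq_abs, abs_div, abs_mul, abs_pow, Nat.abs_cast]
  simp_rw [h]
  exact summable_pmf |c| |x|

lemma neg_pow_pmf (c x : ℝ) (j : ℕ) :
    (-1 : ℝ) ^ j * (c * x ^ j / (j.factorial : ℝ)) = c * (-x) ^ j / (j.factorial : ℝ) := by
  rw [neg_pow]; ring

/-- odd-index sum -/
lemma tsum_odd_pmf (c x : ℝ) :
    ∑' j : ℕ, (if Odd j then c * x ^ j / (j.factorial : ℝ) else 0)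
      = (c * Real.exp x - c * Real.exp (-x)) / 2 := by
  have hterm : ∀ j : ℕ, (if Odd j then c * x ^ j / (j.factorial : ℝ) else 0)
      = (c * x ^ j / (j.factorial : ℝ) - c * (-x) ^ j / (j.factorial : ℝ)) / 2 := by
    intro j
    rcases Nat.even_or_odd j with h | h
    · rw [if_neg (by simpa using Nat.not_odd_iff_even.mpr h), ← neg_pow_pmf, h.neg_one_pow]
      ring
    · rw [if_pos h, ← neg_pow_pmf, h.neg_one_pow]
      ring
  simp_rw [hterm]
  rw [tsum_div_const, Summable.tsum_sub (summable_pmf c x) (summable_pmf c (-x)), tsum_pmf, tsum_pmf]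



lemma exp_neg_mul_exp (l : ℝ) : Real.exp (-l) * Real.exp l = 1 := by
  rw [← Real.exp_add]; simp

lemma poisson_odd (l : ℝ) :
    ∑' j : ℕ, (if Odd j then Real.exp (-l) * l ^ j / (j.factorial : ℝ) else 0)
      = (1 - Real.exp (-l) ^ 2) / 2 := by
  rw [tsum_odd_pmf, exp_neg_mul_exp, ← sq]

lemma poisson_pair_odd (l m : ℝ) :
    ∑' q : ℕ × ℕ, (if Odd (q.1 + q.2)
        then (Real.exp (-l) * l ^ q.1 / (q.1.factorial : ℝ))
          * (Real.exp (-m) * m ^ q.2 / (q.2.factorial : ℝ)) else 0)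
      = (1 - (Real.exp (-l) * Real.exp (-m)) ^ 2) / 2 := by
  have hterm : ∀ q : ℕ × ℕ, (if Odd (q.1 + q.2)
        then (Real.exp (-l) * l ^ q.1 / (q.1.factorial : ℝ))
          * (Real.exp (-m) * m ^ q.2 / (q.2.factorial : ℝ)) else 0)
      = ((Real.exp (-l) * l ^ q.1 / (q.1.factorial : ℝ))
          * (Real.exp (-m) * m ^ q.2 / (q.2.factorial : ℝ))
        - (Real.exp (-l) * (-l) ^ q.1 / (q.1.factorial : ℝ))
          * (Real.exp (-m) * (-m) ^ q.2 / (q.2.factorial : ℝ))) / 2 := by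
    rintro ⟨i, j⟩
    have hneg : (Real.exp (-l) * (-l) ^ i / (i.factorial : ℝ))
          * (Real.exp (-m) * (-m) ^ j / (j.factorial : ℝ))
        = (-1 : ℝ) ^ (i + j) * ((Real.exp (-l) * l ^ i / (i.factorial : ℝ))
          * (Real.exp (-m) * m ^ j / (j.factorial : ℝ))) := by
      rw [← neg_pow_pmf, ← neg_pow_pmf, pow_add]; ring
    rcases Nat.even_or_odd (i + j) with h | h
    · rw [if_neg (by simpa using Nat.not_odd_iff_even.2 h), hneg, h.neg_one_pow]; ring
    · rw [if_pos h, hneg, h.neg_one_pow]; ring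
  rw [tsum_congr hterm]
  have hs1 : Summable (fun q : ℕ × ℕ => (Real.exp (-l) * l ^ q.1 / (q.1.factorial : ℝ))
      * (Real.exp (-m) * m ^ q.2 / (q.2.factorial : ℝ))) :=
    summable_mul_of_summable_norm (f := fun i : ℕ => Real.exp (-l) * l ^ i / (i.factorial : ℝ))
      (g := fun j : ℕ => Real.exp (-m) * m ^ j / (j.factorial : ℝ))
      (summable_norm_pmf _ _) (summable_norm_pmf _ _)
  have hs2 : Summable (fun q : ℕ × ℕ => (Real.exp (-l) * (-l) ^ q.1 / (q.1.factorial : ℝ))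
      * (Real.exp (-m) * (-m) ^ q.2 / (q.2.factorial : ℝ))) :=
    summable_mul_of_summable_norm (f := fun i : ℕ => Real.exp (-l) * (-l) ^ i / (i.factorial : ℝ))
      (g := fun j : ℕ => Real.exp (-m) * (-m) ^ j / (j.factorial : ℝ))
      (summable_norm_pmf _ _) (summable_norm_pmf _ _)
  have hprod1 : (∑' i : ℕ, Real.exp (-l) * l ^ i / (i.factorial : ℝ))
      * (∑' j : ℕ, Real.exp (-m) * m ^ j / (j.factorial : ℝ))
      = ∑' q : ℕ × ℕ, (Real.exp (-l) * l ^ q.1 / (q.1.factorial : ℝ))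
        * (Real.exp (-m) * m ^ q.2 / (q.2.factorial : ℝ)) :=
    tsum_mul_tsum_of_summable_norm (f := fun i : ℕ => Real.exp (-l) * l ^ i / (i.factorial : ℝ))
      (g := fun j : ℕ => Real.exp (-m) * m ^ j / (j.factorial : ℝ))
      (summable_norm_pmf _ _) (summable_norm_pmf _ _)
  have hprod2 : (∑' i : ℕ, Real.exp (-l) * (-l) ^ i / (i.factorial : ℝ))
      * (∑' j : ℕ, Real.exp (-m) * (-m) ^ j / (j.factorial : ℝ))
      = ∑' q : ℕ × ℕ, (Real.exp (-l) * (-l) ^ q.1 / (q.1.factorial : ℝ))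
        * (Real.exp (-m) * (-m) ^ q.2 / (q.2.factorial : ℝ)) :=
    tsum_mul_tsum_of_summable_norm (f := fun i : ℕ => Real.exp (-l) * (-l) ^ i / (i.factorial : ℝ))
      (g := fun j : ℕ => Real.exp (-m) * (-m) ^ j / (j.factorial : ℝ))
      (summable_norm_pmf _ _) (summable_norm_pmf _ _)
  rw [tsum_div_const, Summable.tsum_sub hs1 hs2, ← hprod1, ← hprod2,
    tsum_pmf, tsum_pmf, tsum_pmf, tsum_pmf, exp_neg_mul_exp, exp_neg_mul_exp]
  ring


variable {Ω : Type*} [MeasurableSpace Ω] {P : Measure Ω} [IsProbabilityMeasure P]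

lemma ae_lt_top_F {A : ℕ → Set Ω} (hA : ∀ k, MeasurableSet (A k))
    (hAfin : ∑' k, P (A k) ≠ ∞) :
    ∀ᵐ ω ∂P, (∑' k, (A k).indicator (1 : Ω → ℝ≥0∞) ω) < ∞ :=
  ae_lt_top (meas_F hA) (by rw [lint_F hA]; exact hAfin)

lemma ae_summable_F {A : ℕ → Set Ω} (hA : ∀ k, MeasurableSet (A k))
    (hAfin : ∑' k, P (A k) ≠ ∞) :
    ∀ᵐ ω ∂P, Summable (fun k => (A k).indicator (fun _ => (1 : ℝ)) ω) := by
  filter_upwards [ae_lt_top_F hA hAfin] with ω hω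
  have := ENNReal.summable_toReal hω.ne
  refine this.congr fun k => ?_
  by_cases h : ω ∈ A k <;> simp [Set.indicator_apply, h]

lemma integrable_F {A : ℕ → Set Ω} (hA : ∀ k, MeasurableSet (A k))
    (hAfin : ∑' k, P (A k) ≠ ∞) :
    Integrable (fun ω => (∑' k, (A k).indicator (1 : Ω → ℝ≥0∞) ω).toReal) P :=
  integrable_toReal_of_lintegral_ne_top (meas_F hA).aemeasurable
    (by rw [lint_F hA]; exact hAfin)

lemma integral_F {A : ℕ → Set Ω} (hA : ∀ k, MeasurableSet (A k))
    (hAfin : ∑' k, P (A k) ≠ ∞) :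
    ∫ ω, (∑' k, (A k).indicator (1 : Ω → ℝ≥0∞) ω).toReal ∂P = (∑' k, P (A k)).toReal := by
  rw [integral_toReal (meas_F hA).aemeasurable (ae_lt_top_F hA hAfin), lint_F hA]

lemma integrable_FG {A B : ℕ → Set Ω} (hA : ∀ k, MeasurableSet (A k))
    (hB : ∀ k, MeasurableSet (B k))
    (hpair : ∑' q : ℕ × ℕ, P (A q.1 ∩ B q.2) ≠ ∞) :
    Integrable (fun ω => (∑' k, (A k).indicator (1 : Ω → ℝ≥0∞) ω).toReal
      * (∑' k, (B k).indicator (1 : Ω → ℝ≥0∞) ω).toReal) P := by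
  have heq : (fun ω => (∑' k, (A k).indicator (1 : Ω → ℝ≥0∞) ω).toReal
      * (∑' k, (B k).indicator (1 : Ω → ℝ≥0∞) ω).toReal)
      = fun ω => ((∑' k, (A k).indicator (1 : Ω → ℝ≥0∞) ω)
        * (∑' k, (B k).indicator (1 : Ω → ℝ≥0∞) ω)).toReal := by
    funext ω; rw [ENNReal.toReal_mul]
  rw [heq]
  exact integrable_toReal_of_lintegral_ne_top ((meas_F hA).mul (meas_F hB)).aemeasurable
    (by rw [lint_FG hA hB]; exact hpair)

lemma integral_FG {A B : ℕ → Set Ω} (hA : ∀ k, MeasurableSet (A k))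
    (hB : ∀ k, MeasurableSet (B k))
    (hpair : ∑' q : ℕ × ℕ, P (A q.1 ∩ B q.2) ≠ ∞) :
    ∫ ω, (∑' k, (A k).indicator (1 : Ω → ℝ≥0∞) ω).toReal
      * (∑' k, (B k).indicator (1 : Ω → ℝ≥0∞) ω).toReal ∂P
      = (∑' q : ℕ × ℕ, P (A q.1 ∩ B q.2)).toReal := by
  have heq : ∀ ω, (∑' k, (A k).indicator (1 : Ω → ℝ≥0∞) ω).toReal
      * (∑' k, (B k).indicator (1 : Ω → ℝ≥0∞) ω).toReal
      = ((∑' k, (A k).indicator (1 : Ω → ℝ≥0∞) ω)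
        * (∑' k, (B k).indicator (1 : Ω → ℝ≥0∞) ω)).toReal := fun ω => (ENNReal.toReal_mul).symm
  simp_rw [heq]
  rw [integral_toReal (by exact ((meas_F hA).mul (meas_F hB)).aemeasurable : AEMeasurable (fun ω => (∑' k, (A k).indicator (1 : Ω → ℝ≥0∞) ω) * (∑' k, (B k).indicator (1 : Ω → ℝ≥0∞) ω)) P) ?hlt, lint_FG hA hB]
  case hlt =>
    exact ae_lt_top ((meas_F hA).mul (meas_F hB)) (by rw [lint_FG hA hB]; exact hpair)

lemma memLp_F {A : ℕ → Set Ω} (hA : ∀ k, MeasurableSet (A k))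
    (hAfin : ∑' k, P (A k) ≠ ∞)
    (hAA : ∀ k j, k ≠ j → P (A k ∩ A j) = P (A k) * P (A j)) :
    MemLp (fun ω => (∑' k, (A k).indicator (1 : Ω → ℝ≥0∞) ω).toReal) 2 P := by
  refine (memLp_two_iff_integrable_sq (meas_F hA).ennreal_toReal.aestronglyMeasurable).2 ?_
  have := integrable_FG (P := P) hA hA (pairsum_ne_top hAA hAfin hAfin)
  refine this.congr (ae_of_all _ fun ω => ?_)
  simp only
  ring

lemma cov_F {A B : ℕ → Set Ω} (hA : ∀ k, MeasurableSet (A k))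
    (hB : ∀ k, MeasurableSet (B k))
    (hAfin : ∑' k, P (A k) ≠ ∞) (hBfin : ∑' k, P (B k) ≠ ∞)
    (hAB : ∀ k j, k ≠ j → P (A k ∩ B j) = P (A k) * P (B j)) :
    ∫ ω, ((∑' k, (A k).indicator (1 : Ω → ℝ≥0∞) ω).toReal
        - ∫ ω', (∑' k, (A k).indicator (1 : Ω → ℝ≥0∞) ω').toReal ∂P)
      * ((∑' k, (B k).indicator (1 : Ω → ℝ≥0∞) ω).toReal
        - ∫ ω', (∑' k, (B k).indicator (1 : Ω → ℝ≥0∞) ω').toReal ∂P) ∂P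
      = ∑' k, ((P (A k ∩ B k)).toReal - (P (A k)).toReal * (P (B k)).toReal) := by
  have hpair := pairsum_ne_top hAB hAfin hBfin
  set FA := fun ω => (∑' k, (A k).indicator (1 : Ω → ℝ≥0∞) ω).toReal with hFA
  set FB := fun ω => (∑' k, (B k).indicator (1 : Ω → ℝ≥0∞) ω).toReal with hFB
  set IA := ∫ ω', FA ω' ∂P with hIA
  set IB := ∫ ω', FB ω' ∂P with hIB
  have hintA := integrable_F (P := P) hA hAfin
  have hintB := integrable_F (P := P) hB hBfin
  have hintAB := integrable_FG (P := P) hA hB hpair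
  -- expansion
  have hexp : ∀ ω, (FA ω - IA) * (FB ω - IB)
      = FA ω * FB ω - (IA * FB ω + IB * FA ω - IA * IB) := fun ω => by ring
  have hint1 : Integrable (fun ω => IA * FB ω) P := by exact hintB.const_mul IA
  have hint2 : Integrable (fun ω => IB * FA ω) P := by exact hintA.const_mul IB
  have h2int : Integrable (fun ω => IA * FB ω + IB * FA ω) P := by exact hint1.add hint2
  have hints : Integrable (fun ω => IA * FB ω + IB * FA ω - IA * IB) P := by
    exact h2int.sub (integrable_const _)
  have hsecond : ∫ ω, (IA * FB ω + IB * FA ω - IA * IB) ∂P = IA * IB := by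
    rw [integral_sub h2int (integrable_const _), integral_add hint1 hint2,
      integral_const_mul, integral_const_mul, integral_const]
    simp only [probReal_univ, measure_univ, ENNReal.toReal_one, one_smul, ← hIA, ← hIB]
    ring
  have hcov : ∫ ω, (FA ω - IA) * (FB ω - IB) ∂P = (∫ ω, FA ω * FB ω ∂P) - IA * IB := by
    simp_rw [hexp]
    rw [integral_sub hintAB hints, hsecond]
  rw [hcov]
  -- sums
  have hVA : IA = (∑' k, P (A k)).toReal := integral_F hA hAfin
  have hVB : IB = (∑' k, P (B k)).toReal := integral_F hB hBfin
  have hVAB : ∫ ω, FA ω * FB ω ∂P = (∑' q : ℕ × ℕ, P (A q.1 ∩ B q.2)).toReal :=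
    integral_FG hA hB hpair
  rw [hVAB, hVA, hVB]
  have hsc : Summable (fun q : ℕ × ℕ => (P (A q.1 ∩ B q.2)).toReal) :=
    ENNReal.summable_toReal hpair
  have hsa : Summable (fun k => (P (A k)).toReal) := ENNReal.summable_toReal hAfin
  have hsb : Summable (fun k => (P (B k)).toReal) := ENNReal.summable_toReal hBfin
  have hna : Summable (fun k => ‖(P (A k)).toReal‖) := by
    simpa [Real.norm_eq_abs, abs_of_nonneg ENNReal.toReal_nonneg] using hsa
  have hnb : Summable (fun k => ‖(P (B k)).toReal‖) := by
    simpa [Real.norm_eq_abs, abs_of_nonneg ENNReal.toReal_nonneg] using hsb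
  have hsd : Summable (fun q : ℕ × ℕ => (P (A q.1)).toReal * (P (B q.2)).toReal) :=
    summable_mul_of_summable_norm hna hnb
  have h1 : (∑' q : ℕ × ℕ, P (A q.1 ∩ B q.2)).toReal
      = ∑' q : ℕ × ℕ, (P (A q.1 ∩ B q.2)).toReal :=
    ENNReal.tsum_toReal_eq fun _ => measure_ne_top _ _
  have h2 : (∑' k, P (A k)).toReal * (∑' k, P (B k)).toReal
      = ∑' q : ℕ × ℕ, (P (A q.1)).toReal * (P (B q.2)).toReal := by
    rw [ENNReal.tsum_toReal_eq fun _ => measure_ne_top _ _,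
      ENNReal.tsum_toReal_eq fun _ => measure_ne_top _ _]
    exact tsum_mul_tsum_of_summable_norm hna hnb
  rw [h1, h2, ← Summable.tsum_sub hsc hsd, Summable.tsum_prod' (hsc.sub hsd) (fun b => (hsc.sub hsd).prod_factor b)]
  refine tsum_congr fun k => ?_
  refine (tsum_eq_single k fun j hj => ?_).trans rfl
  rw [hAB k j fun h => hj h.symm, ENNReal.toReal_mul, sub_self]


end CovOcc

open CovOcc in
/-- Cross-covariances of the Poissonized occupancy and odd-occupancy processes at times
`τ ≤ t`: `Cov(R(τ), U(t)) = (1/2) ∑_k (e^{−p_k(2t−τ)} − e^{−p_k(2t+τ)})` and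
`Cov(R(t), U(τ)) = (1/2) ∑_k (e^{−p_k t} − e^{−p_k(2τ+t)})`. -/
theorem covariance_occupancy_odd_occupancy
    {Ω : Type*} [MeasurableSpace Ω] (P : Measure Ω) [IsProbabilityMeasure P]
    (p : ℕ → ℝ) (hp_pos : ∀ k, 0 < p k) (hp_sum : ∑' k, p k = 1)
    (τ t : ℝ) (hτ : 0 < τ) (hτt : τ ≤ t)
    (X Y : ℕ → Ω → ℕ) (hX_meas : ∀ k, Measurable (X k)) (hY_meas : ∀ k, Measurable (Y k))
    (h_indep : iIndepFun (Sum.elim X Y) P)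
    (hX : ∀ k, ∀ j : ℕ, (P {ω | X k ω = j}).toReal
      = Real.exp (-(p k * τ)) * (p k * τ) ^ j / j.factorial)
    (hY : ∀ k, ∀ j : ℕ, (P {ω | Y k ω = j}).toReal
      = Real.exp (-(p k * (t - τ))) * (p k * (t - τ)) ^ j / j.factorial)
    (Rτ Rt Uτ Ut : Ω → ℝ)
    (hRτ : ∀ ω, Rτ ω = ∑' k, if 1 ≤ X k ω then (1 : ℝ) else 0)
    (hRt : ∀ ω, Rt ω = ∑' k, if 1 ≤ X k ω + Y k ω then (1 : ℝ) else 0)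
    (hUτ : ∀ ω, Uτ ω = ∑' k, if Odd (X k ω) then (1 : ℝ) else 0)
    (hUt : ∀ ω, Ut ω = ∑' k, if Odd (X k ω + Y k ω) then (1 : ℝ) else 0) :
    (∀ᵐ ω ∂P, Summable fun k => if 1 ≤ X k ω then (1 : ℝ) else 0) ∧
    (∀ᵐ ω ∂P, Summable fun k => if 1 ≤ X k ω + Y k ω then (1 : ℝ) else 0) ∧
    (∀ᵐ ω ∂P, Summable fun k => if Odd (X k ω) then (1 : ℝ) else 0) ∧
    (∀ᵐ ω ∂P, Summable fun k => if Odd (X k ω + Y k ω) then (1 : ℝ) else 0) ∧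
    MemLp Rτ 2 P ∧ MemLp Rt 2 P ∧ MemLp Uτ 2 P ∧ MemLp Ut 2 P ∧
    (∫ ω, (Rτ ω - ∫ ω', Rτ ω' ∂P) * (Ut ω - ∫ ω', Ut ω' ∂P) ∂P)
      = (1 / 2) * ∑' k, (Real.exp (-(p k * (2 * t - τ)))
          - Real.exp (-(p k * (2 * t + τ)))) ∧
    (∫ ω, (Rt ω - ∫ ω', Rt ω' ∂P) * (Uτ ω - ∫ ω', Uτ ω' ∂P) ∂P)
      = (1 / 2) * ∑' k, (Real.exp (-(p k * t))
          - Real.exp (-(p k * (2 * τ + t)))) := by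
  -- basic facts
  have hpsum : Summable p := by
    by_contra h
    rw [tsum_eq_zero_of_not_summable h] at hp_sum
    norm_num at hp_sum
  have hf_meas : ∀ i : ℕ ⊕ ℕ, Measurable (Sum.elim X Y i) := by
    rintro (k | k)
    exacts [hX_meas k, hY_meas k]
  have hms : ∀ s : Set ℕ, MeasurableSet s := fun s => (Set.to_countable s).measurableSet
  have hms2 : ∀ s : Set (ℕ × ℕ), MeasurableSet s := fun s => (Set.to_countable s).measurableSet
  have hpairk : ∀ k, Measurable (fun ω => (X k ω, Y k ω)) :=
    fun k => (hX_meas k).prodMk (hY_meas k)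
  -- measurable sets
  have hmA : ∀ k, MeasurableSet {ω | 1 ≤ X k ω} :=
    fun k => hX_meas k (hms {n : ℕ | 1 ≤ n})
  have hmB : ∀ k, MeasurableSet {ω | 1 ≤ X k ω + Y k ω} :=
    fun k => hpairk k (hms2 {q : ℕ × ℕ | 1 ≤ q.1 + q.2})
  have hmC : ∀ k, MeasurableSet {ω | Odd (X k ω)} :=
    fun k => hX_meas k (hms {n : ℕ | Odd n})
  have hmD : ∀ k, MeasurableSet {ω | Odd (X k ω + Y k ω)} :=
    fun k => hpairk k (hms2 {q : ℕ × ℕ | Odd (q.1 + q.2)})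
  have hmX0 : ∀ k, MeasurableSet {ω | X k ω = 0} :=
    fun k => hX_meas k (hms {n : ℕ | n = 0})
  have hmOY : ∀ k, MeasurableSet {ω | Odd (Y k ω)} :=
    fun k => hY_meas k (hms {n : ℕ | Odd n})
  have hmY0 : ∀ k, MeasurableSet {ω | Y k ω = 0} :=
    fun k => hY_meas k (hms {n : ℕ | n = 0})
  -- independence
  have indXY : ∀ k, IndepFun (X k) (Y k) P :=
    fun k => h_indep.indepFun (show (Sum.inl k : ℕ ⊕ ℕ) ≠ Sum.inr k by simp)
  have indXX : ∀ k j, k ≠ j → IndepFun (X k) (X j) P :=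
    fun k j hkj => h_indep.indepFun (show (Sum.inl k : ℕ ⊕ ℕ) ≠ Sum.inl j by simp [hkj])
  have indXP : ∀ k j, k ≠ j → IndepFun (X k) (fun ω => (X j ω, Y j ω)) P := fun k j hkj =>
    (h_indep.indepFun_prodMk hf_meas (Sum.inl j) (Sum.inr j) (Sum.inl k)
      (by simp [Ne.symm hkj]) (by simp)).symm
  have indPX : ∀ k j, k ≠ j → IndepFun (fun ω => (X k ω, Y k ω)) (X j) P := fun k j hkj =>
    h_indep.indepFun_prodMk hf_meas (Sum.inl k) (Sum.inr k) (Sum.inl j)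
      (by simp [hkj]) (by simp)
  have indPP : ∀ k j, k ≠ j →
      IndepFun (fun ω => (X k ω, Y k ω)) (fun ω => (X j ω, Y j ω)) P := fun k j hkj =>
    h_indep.indepFun_prodMk_prodMk hf_meas (Sum.inl k) (Sum.inr k) (Sum.inl j) (Sum.inr j)
      (by simp [hkj]) (by simp) (by simp) (by simp [hkj])
  -- product rules
  have hAAr : ∀ k j, k ≠ j → P ({ω | 1 ≤ X k ω} ∩ {ω | 1 ≤ X j ω})
      = P {ω | 1 ≤ X k ω} * P {ω | 1 ≤ X j ω} := fun k j hkj =>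
    (indXX k j hkj).measure_inter_preimage_eq_mul {n : ℕ | 1 ≤ n} {n : ℕ | 1 ≤ n}
      (hms _) (hms _)
  have hCCr : ∀ k j, k ≠ j → P ({ω | Odd (X k ω)} ∩ {ω | Odd (X j ω)})
      = P {ω | Odd (X k ω)} * P {ω | Odd (X j ω)} := fun k j hkj =>
    (indXX k j hkj).measure_inter_preimage_eq_mul {n : ℕ | Odd n} {n : ℕ | Odd n}
      (hms _) (hms _)
  have hBBr : ∀ k j, k ≠ j → P ({ω | 1 ≤ X k ω + Y k ω} ∩ {ω | 1 ≤ X j ω + Y j ω})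
      = P {ω | 1 ≤ X k ω + Y k ω} * P {ω | 1 ≤ X j ω + Y j ω} := fun k j hkj =>
    (indPP k j hkj).measure_inter_preimage_eq_mul {q : ℕ × ℕ | 1 ≤ q.1 + q.2}
      {q : ℕ × ℕ | 1 ≤ q.1 + q.2} (hms2 _) (hms2 _)
  have hDDr : ∀ k j, k ≠ j → P ({ω | Odd (X k ω + Y k ω)} ∩ {ω | Odd (X j ω + Y j ω)})
      = P {ω | Odd (X k ω + Y k ω)} * P {ω | Odd (X j ω + Y j ω)} := fun k j hkj =>
    (indPP k j hkj).measure_inter_preimage_eq_mul {q : ℕ × ℕ | Odd (q.1 + q.2)}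
      {q : ℕ × ℕ | Odd (q.1 + q.2)} (hms2 _) (hms2 _)
  have hADr : ∀ k j, k ≠ j → P ({ω | 1 ≤ X k ω} ∩ {ω | Odd (X j ω + Y j ω)})
      = P {ω | 1 ≤ X k ω} * P {ω | Odd (X j ω + Y j ω)} := fun k j hkj =>
    (indXP k j hkj).measure_inter_preimage_eq_mul {n : ℕ | 1 ≤ n}
      {q : ℕ × ℕ | Odd (q.1 + q.2)} (hms _) (hms2 _)
  have hBCr : ∀ k j, k ≠ j → P ({ω | 1 ≤ X k ω + Y k ω} ∩ {ω | Odd (X j ω)})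
      = P {ω | 1 ≤ X k ω + Y k ω} * P {ω | Odd (X j ω)} := fun k j hkj =>
    (indPX k j hkj).measure_inter_preimage_eq_mul {q : ℕ × ℕ | 1 ≤ q.1 + q.2}
      {n : ℕ | Odd n} (hms2 _) (hms _)
  -- marginal values
  have hA0 : ∀ k, (P {ω | X k ω = 0}).toReal = Real.exp (-(p k * τ)) := fun k => by
    simpa using hX k 0
  have hY0 : ∀ k, (P {ω | Y k ω = 0}).toReal = Real.exp (-(p k * (t - τ))) := fun k => by
    simpa using hY k 0
  have hPA : ∀ k, (P {ω | 1 ≤ X k ω}).toReal = 1 - Real.exp (-(p k * τ)) := by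
    intro k
    have hc : {ω | 1 ≤ X k ω} = {ω | X k ω = 0}ᶜ := by
      ext ω; simp [Nat.one_le_iff_ne_zero]
    rw [hc, measure_compl (hmX0 k) (measure_ne_top _ _), measure_univ,
      ENNReal.toReal_sub_of_le prob_le_one ENNReal.one_ne_top, ENNReal.toReal_one, hA0 k]
  have hprodXY0 : ∀ k, P ({ω | X k ω = 0} ∩ {ω | Y k ω = 0})
      = P {ω | X k ω = 0} * P {ω | Y k ω = 0} := fun k =>
    (indXY k).measure_inter_preimage_eq_mul {n : ℕ | n = 0} {n : ℕ | n = 0} (hms _) (hms _)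
  have hPB : ∀ k, (P {ω | 1 ≤ X k ω + Y k ω}).toReal
      = 1 - Real.exp (-(p k * τ)) * Real.exp (-(p k * (t - τ))) := by
    intro k
    have hc : {ω | 1 ≤ X k ω + Y k ω} = ({ω | X k ω = 0} ∩ {ω | Y k ω = 0})ᶜ := by
      ext ω
      simp only [Set.mem_setOf_eq, Set.mem_compl_iff, Set.mem_inter_iff, not_and]
      omega
    rw [hc, measure_compl ((hmX0 k).inter (hmY0 k))
        (measure_ne_top _ _), measure_univ,
      ENNReal.toReal_sub_of_le prob_le_one ENNReal.one_ne_top, ENNReal.toReal_one,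
      hprodXY0 k, ENNReal.toReal_mul, hA0 k, hY0 k]
  have hPC : ∀ k, (P {ω | Odd (X k ω)}).toReal = (1 - Real.exp (-(p k * τ)) ^ 2) / 2 := by
    intro k
    exact (meas_event_toReal (X k) (hX_meas k) Odd).trans
      ((tsum_congr fun j => by by_cases h : Odd j <;> simp [h, hX k]).trans
        (poisson_odd (p k * τ)))
  have hPOY : ∀ k, (P {ω | Odd (Y k ω)}).toReal
      = (1 - Real.exp (-(p k * (t - τ))) ^ 2) / 2 := by
    intro k
    exact (meas_event_toReal (Y k) (hY_meas k) Odd).trans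
      ((tsum_congr fun j => by by_cases h : Odd j <;> simp [h, hY k]).trans
        (poisson_odd (p k * (t - τ))))
  have hPD : ∀ k, (P {ω | Odd (X k ω + Y k ω)}).toReal
      = (1 - (Real.exp (-(p k * τ)) * Real.exp (-(p k * (t - τ)))) ^ 2) / 2 := by
    intro k
    exact (meas_event2_toReal (X k) (Y k) (hX_meas k) (hY_meas k) (indXY k)
        (fun i j => Odd (i + j))).trans
      ((tsum_congr fun q => by
          by_cases h : Odd (q.1 + q.2) <;> simp [h, hX k, hY k]).trans
        (poisson_pair_odd (p k * τ) (p k * (t - τ))))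
  -- joint values on the diagonal
  have hPAD : ∀ k, (P ({ω | 1 ≤ X k ω} ∩ {ω | Odd (X k ω + Y k ω)})).toReal
      = (1 - (Real.exp (-(p k * τ)) * Real.exp (-(p k * (t - τ)))) ^ 2) / 2
        - Real.exp (-(p k * τ)) * ((1 - Real.exp (-(p k * (t - τ))) ^ 2) / 2) := by
    intro k
    have hEsub : ({ω | X k ω = 0} ∩ {ω | Odd (Y k ω)}) ⊆ {ω | Odd (X k ω + Y k ω)} := by
      rintro ω ⟨h0, h1⟩
      simp only [Set.mem_setOf_eq] at *
      rw [h0, zero_add]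
      exact h1
    have hset : {ω | 1 ≤ X k ω} ∩ {ω | Odd (X k ω + Y k ω)}
        = {ω | Odd (X k ω + Y k ω)} \ ({ω | X k ω = 0} ∩ {ω | Odd (Y k ω)}) := by
      ext ω
      simp only [Set.mem_inter_iff, Set.mem_diff, Set.mem_setOf_eq, not_and]
      constructor
      · rintro ⟨h1, h2⟩
        exact ⟨h2, fun h0 _ => by omega⟩
      · rintro ⟨h2, h3⟩
        refine ⟨?_, h2⟩
        by_contra h
        have h0 : X k ω = 0 := by omega
        exact h3 h0 (by rwa [h0, zero_add] at h2)
    have hprodE : P ({ω | X k ω = 0} ∩ {ω | Odd (Y k ω)})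
        = P {ω | X k ω = 0} * P {ω | Odd (Y k ω)} :=
      (indXY k).measure_inter_preimage_eq_mul {n : ℕ | n = 0} {n : ℕ | Odd n} (hms _) (hms _)
    rw [hset, measure_diff hEsub ((hmX0 k).inter (hmOY k)).nullMeasurableSet
        (measure_ne_top _ _),
      ENNReal.toReal_sub_of_le (measure_mono hEsub) (measure_ne_top _ _),
      hprodE, ENNReal.toReal_mul, hA0 k, hPOY k, hPD k]
  have hBCset : ∀ k, {ω | 1 ≤ X k ω + Y k ω} ∩ {ω | Odd (X k ω)} = {ω | Odd (X k ω)} := by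
    intro k
    refine Set.inter_eq_right.mpr ?_
    intro ω hodd
    simp only [Set.mem_setOf_eq] at *
    have := hodd.pos
    omega
  -- finiteness
  have hfin : ∀ (S : ℕ → Set Ω) (c : ℝ), 0 ≤ c → (∀ k, (P (S k)).toReal ≤ p k * c) →
      ∑' k, P (S k) ≠ ∞ := by
    intro S c hc hle
    have hb : ∀ k, P (S k) ≤ ENNReal.ofReal (p k * c) := fun k => by
      rw [← ENNReal.ofReal_toReal (measure_ne_top P (S k))]
      exact ENNReal.ofReal_le_ofReal (hle k)
    refine ne_top_of_le_ne_top ?_ (ENNReal.tsum_le_tsum hb)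
    rw [← ENNReal.ofReal_tsum_of_nonneg (fun k => mul_nonneg (hp_pos k).le hc)
      (hpsum.mul_right c)]
    exact ENNReal.ofReal_ne_top
  have ht0 : (0 : ℝ) ≤ t := le_trans hτ.le hτt
  have habt : ∀ k, Real.exp (-(p k * τ)) * Real.exp (-(p k * (t - τ)))
      = Real.exp (-(p k * t)) := by
    intro k; rw [← Real.exp_add]; congr 1; ring
  have hAfin : ∑' k, P {ω | 1 ≤ X k ω} ≠ ∞ := by
    refine hfin _ τ hτ.le fun k => ?_
    rw [hPA k]
    linarith [Real.add_one_le_exp (-(p k * τ))]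
  have hBfin : ∑' k, P {ω | 1 ≤ X k ω + Y k ω} ≠ ∞ := by
    refine hfin _ t ht0 fun k => ?_
    rw [hPB k, habt k]
    linarith [Real.add_one_le_exp (-(p k * t))]
  have hCfin : ∑' k, P {ω | Odd (X k ω)} ≠ ∞ := by
    refine hfin _ τ hτ.le fun k => ?_
    rw [hPC k]
    have hsq : Real.exp (-(p k * τ)) ^ 2 = Real.exp (-(2 * (p k * τ))) := by
      rw [sq, ← Real.exp_add]; congr 1; ring
    rw [hsq]
    linarith [Real.add_one_le_exp (-(2 * (p k * τ)))]
  have hDfin : ∑' k, P {ω | Odd (X k ω + Y k ω)} ≠ ∞ := by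
    refine hfin _ t ht0 fun k => ?_
    rw [hPD k, habt k]
    have hsq : Real.exp (-(p k * t)) ^ 2 = Real.exp (-(2 * (p k * t))) := by
      rw [sq, ← Real.exp_add]; congr 1; ring
    rw [hsq]
    linarith [Real.add_one_le_exp (-(2 * (p k * t)))]
  -- function representations
  have hRτeq : ∀ ω, Rτ ω
      = (∑' k, ({ω' | 1 ≤ X k ω'} : Set Ω).indicator (1 : Ω → ℝ≥0∞) ω).toReal := fun ω =>
    (hRτ ω).trans ((tsum_congr fun k => by
      by_cases h : 1 ≤ X k ω <;> simp [Set.indicator_apply, Set.mem_setOf_eq, h]).trans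
      (toReal_F _ ω).symm)
  have hRteq : ∀ ω, Rt ω
      = (∑' k, ({ω' | 1 ≤ X k ω' + Y k ω'} : Set Ω).indicator (1 : Ω → ℝ≥0∞) ω).toReal :=
    fun ω => (hRt ω).trans ((tsum_congr fun k => by
      by_cases h : 1 ≤ X k ω + Y k ω <;> simp [Set.indicator_apply, Set.mem_setOf_eq, h]).trans
      (toReal_F _ ω).symm)
  have hUτeq : ∀ ω, Uτ ω
      = (∑' k, ({ω' | Odd (X k ω')} : Set Ω).indicator (1 : Ω → ℝ≥0∞) ω).toReal := fun ω =>
    (hUτ ω).trans ((tsum_congr fun k => by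
      by_cases h : Odd (X k ω) <;> simp [Set.indicator_apply, Set.mem_setOf_eq, h]).trans
      (toReal_F _ ω).symm)
  have hUteq : ∀ ω, Ut ω
      = (∑' k, ({ω' | Odd (X k ω' + Y k ω')} : Set Ω).indicator (1 : Ω → ℝ≥0∞) ω).toReal :=
    fun ω => (hUt ω).trans ((tsum_congr fun k => by
      by_cases h : Odd (X k ω + Y k ω) <;> simp [Set.indicator_apply, Set.mem_setOf_eq, h]).trans
      (toReal_F _ ω).symm)
  refine ⟨?_, ?_, ?_, ?_, ?_, ?_, ?_, ?_, ?_, ?_⟩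
  · filter_upwards [ae_summable_F hmA hAfin] with ω hω
    exact hω.congr fun k => by
      by_cases h : 1 ≤ X k ω <;> simp [Set.indicator_apply, Set.mem_setOf_eq, h]
  · filter_upwards [ae_summable_F hmB hBfin] with ω hω
    exact hω.congr fun k => by
      by_cases h : 1 ≤ X k ω + Y k ω <;> simp [Set.indicator_apply, Set.mem_setOf_eq, h]
  · filter_upwards [ae_summable_F hmC hCfin] with ω hω
    exact hω.congr fun k => by
      by_cases h : Odd (X k ω) <;> simp [Set.indicator_apply, Set.mem_setOf_eq, h]
  · filter_upwards [ae_summable_F hmD hDfin] with ω hω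
    exact hω.congr fun k => by
      by_cases h : Odd (X k ω + Y k ω) <;> simp [Set.indicator_apply, Set.mem_setOf_eq, h]
  · rw [funext hRτeq]; exact memLp_F hmA hAfin hAAr
  · rw [funext hRteq]; exact memLp_F hmB hBfin hBBr
  · rw [funext hUτeq]; exact memLp_F hmC hCfin hCCr
  · rw [funext hUteq]; exact memLp_F hmD hDfin hDDr
  · -- Cov(Rτ, Ut)
    have hterm : ∀ k, (P ({ω | 1 ≤ X k ω} ∩ {ω | Odd (X k ω + Y k ω)})).toReal
        - (P {ω | 1 ≤ X k ω}).toReal * (P {ω | Odd (X k ω + Y k ω)}).toReal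
        = (Real.exp (-(p k * (2 * t - τ))) - Real.exp (-(p k * (2 * t + τ)))) * (1 / 2) := by
      intro k
      have e1 : Real.exp (-(p k * (2 * t - τ)))
          = Real.exp (-(p k * τ)) * (Real.exp (-(p k * (t - τ)))
            * Real.exp (-(p k * (t - τ)))) := by
        rw [← Real.exp_add, ← Real.exp_add]; congr 1; ring
      have e2 : Real.exp (-(p k * (2 * t + τ)))
          = Real.exp (-(p k * τ)) * (Real.exp (-(p k * τ)) * (Real.exp (-(p k * τ))
            * (Real.exp (-(p k * (t - τ))) * Real.exp (-(p k * (t - τ)))))) := by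
        rw [← Real.exp_add, ← Real.exp_add, ← Real.exp_add, ← Real.exp_add]; congr 1; ring
      rw [hPAD k, hPA k, hPD k, e1, e2]
      ring
    calc ∫ ω, (Rτ ω - ∫ ω', Rτ ω' ∂P) * (Ut ω - ∫ ω', Ut ω' ∂P) ∂P
        = ∫ ω, ((∑' k, ({ω' | 1 ≤ X k ω'} : Set Ω).indicator (1 : Ω → ℝ≥0∞) ω).toReal
            - ∫ ω', (∑' k, ({ω' | 1 ≤ X k ω'} : Set Ω).indicator (1 : Ω → ℝ≥0∞) ω').toReal ∂P)
          * ((∑' k, ({ω' | Odd (X k ω' + Y k ω')} : Set Ω).indicator (1 : Ω → ℝ≥0∞) ω).toReal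
            - ∫ ω', (∑' k, ({ω' | Odd (X k ω' + Y k ω')} : Set Ω).indicator
                (1 : Ω → ℝ≥0∞) ω').toReal ∂P) ∂P := by
          simp only [funext hRτeq, funext hUteq]
      _ = ∑' k, ((P ({ω | 1 ≤ X k ω} ∩ {ω | Odd (X k ω + Y k ω)})).toReal
            - (P {ω | 1 ≤ X k ω}).toReal * (P {ω | Odd (X k ω + Y k ω)}).toReal) :=
          cov_F hmA hmD hAfin hDfin hADr
      _ = ∑' k, (Real.exp (-(p k * (2 * t - τ))) - Real.exp (-(p k * (2 * t + τ)))) * (1 / 2) :=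
          tsum_congr hterm
      _ = (1 / 2) * ∑' k, (Real.exp (-(p k * (2 * t - τ)))
            - Real.exp (-(p k * (2 * t + τ)))) := by
          rw [tsum_mul_right]; ring
  · -- Cov(Rt, Uτ)
    have hterm : ∀ k, (P ({ω | 1 ≤ X k ω + Y k ω} ∩ {ω | Odd (X k ω)})).toReal
        - (P {ω | 1 ≤ X k ω + Y k ω}).toReal * (P {ω | Odd (X k ω)}).toReal
        = (Real.exp (-(p k * t)) - Real.exp (-(p k * (2 * τ + t)))) * (1 / 2) := by
      intro k
      have e3 : Real.exp (-(p k * t))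
          = Real.exp (-(p k * τ)) * Real.exp (-(p k * (t - τ))) := (habt k).symm
      have e4 : Real.exp (-(p k * (2 * τ + t)))
          = Real.exp (-(p k * τ)) * (Real.exp (-(p k * τ)) * (Real.exp (-(p k * τ))
            * Real.exp (-(p k * (t - τ))))) := by
        rw [← Real.exp_add, ← Real.exp_add, ← Real.exp_add]; congr 1; ring
      rw [hBCset k, hPC k, hPB k, e3, e4]
      ring
    calc ∫ ω, (Rt ω - ∫ ω', Rt ω' ∂P) * (Uτ ω - ∫ ω', Uτ ω' ∂P) ∂P
        = ∫ ω, ((∑' k, ({ω' | 1 ≤ X k ω' + Y k ω'} : Set Ω).indicator (1 : Ω → ℝ≥0∞) ω).toReal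
            - ∫ ω', (∑' k, ({ω' | 1 ≤ X k ω' + Y k ω'} : Set Ω).indicator
                (1 : Ω → ℝ≥0∞) ω').toReal ∂P)
          * ((∑' k, ({ω' | Odd (X k ω')} : Set Ω).indicator (1 : Ω → ℝ≥0∞) ω).toReal
            - ∫ ω', (∑' k, ({ω' | Odd (X k ω')} : Set Ω).indicator
                (1 : Ω → ℝ≥0∞) ω').toReal ∂P) ∂P := by
          simp only [funext hRteq, funext hUτeq]
      _ = ∑' k, ((P ({ω | 1 ≤ X k ω + Y k ω} ∩ {ω | Odd (X k ω)})).toReal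
            - (P {ω | 1 ≤ X k ω + Y k ω}).toReal * (P {ω | Odd (X k ω)}).toReal) :=
          cov_F hmB hmC hBfin hCfin hBCr
      _ = ∑' k, (Real.exp (-(p k * t)) - Real.exp (-(p k * (2 * τ + t)))) * (1 / 2) :=
          tsum_congr hterm
      _ = (1 / 2) * ∑' k, (Real.exp (-(p k * t)) - Real.exp (-(p k * (2 * τ + t)))) := by
          rw [tsum_mul_right]; ring
end

section
/- For all fixed reals 0 < τ ≤ t, lim_{n→∞} (1/α(n)) · (1/4) Σ_{k≥1} ( e^{−2 p_k n (t − τ)} − e^{−2 p_k n (t + τ)} ) = Γ(1 − θ) · 2^{θ−2} · ( (t + τ)^θ − (t − τ)^θ ), where Γ is the Gamma function. -/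
open Filter Topology Real

namespace CovarianceAux

open MeasureTheory Set Filter Topology Real

noncomputable def A (p : ℕ → ℝ) (x : ℝ) : ℝ := (Set.ncard {i : ℕ | p i ≥ 1 / x} : ℝ)

lemma finite_set {p : ℕ → ℝ} (hp : Summable p) {x : ℝ} (hx : 0 < x) :
    {i : ℕ | p i ≥ 1 / x}.Finite := by
  have h0 : Tendsto p atTop (𝓝 0) := hp.tendsto_atTop_zero
  have h1 : ∀ᶠ i in atTop, p i < 1 / x := h0.eventually (gt_mem_nhds (by positivity))
  rw [← Nat.cofinite_eq_atTop, eventually_cofinite] at h1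
  exact h1.subset (fun i hi => by simp only [mem_setOf_eq, not_lt] at hi ⊢; exact hi)

lemma exp_int (c s : ℝ) (hs : 0 ≤ s) :
    ∫ u in Set.Ioc (0:ℝ) s, c * rexp (-(c*u)) = 1 - rexp (-(c*s)) := by
  have h1 : ∫ u in (0:ℝ)..s, c * rexp (-(c*u)) = 1 - rexp (-(c*s)) := by
    have hd : ∀ u ∈ Set.uIcc (0:ℝ) s, HasDerivAt (fun v => -rexp (-(c*v))) (c * rexp (-(c*u))) u := by
      intro u _
      have h2 := (((hasDerivAt_id u).const_mul (-c)).exp).neg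
      have e1 : (fun v => -rexp (-(c*v))) = -fun x => rexp (-c * id x) := by
        funext v; simp [neg_mul]
      rw [e1]
      exact h2.congr_deriv (by simp only [id, neg_mul, mul_one]; ring)
    rw [intervalIntegral.integral_eq_sub_of_hasDerivAt hd]
    · simp; ring
    · apply Continuous.intervalIntegrable; continuity
  rw [← h1, intervalIntegral.integral_of_le hs]

lemma tsum_eq_integral {p : ℕ → ℝ} (hp_pos : ∀ k, 0 < p k) (hp : Summable p)
    {c ν : ℝ} (hc : 0 < c) (hν : 0 < ν) :
    ∑' k, (1 - rexp (-(c * (ν * p k)))) =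
      ∫ u in Set.Ioi (0:ℝ), c * rexp (-(c*u)) * A p (ν/u) := by
  set μ := volume.restrict (Set.Ioi (0:ℝ)) with hμ
  set g : ℝ → ℝ := fun u => c * rexp (-(c*u)) with hg
  have hgcont : Continuous g := by continuity
  set f : ℕ → ℝ → ℝ := fun k => (Set.Ioc (0:ℝ) (ν * p k)).indicator g with hf
  have hmeas : ∀ k, AEStronglyMeasurable (f k) μ := fun k =>
    ((hgcont.measurable.indicator measurableSet_Ioc)).aestronglyMeasurable
  have hintk : ∀ k, ∫ u, f k u ∂μ = 1 - rexp (-(c * (ν * p k))) := by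
    intro k
    rw [hf, integral_indicator measurableSet_Ioc, hμ, Measure.restrict_restrict measurableSet_Ioc,
      Set.inter_eq_left.mpr Set.Ioc_subset_Ioi_self]
    exact exp_int c _ (mul_pos hν (hp_pos k)).le
  have hfnn : ∀ k u, 0 ≤ f k u := by
    intro k u
    apply Set.indicator_nonneg
    intro u _; positivity
  have hfint : ∀ k, Integrable (f k) μ := by
    intro k
    exact ((hgcont.integrableOn_Ioc).integrable_indicator measurableSet_Ioc).restrict
  have hnorm : ∑' k, ∫⁻ u, ‖f k u‖₊ ∂μ ≠ ⊤ := by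
    have heq : ∀ k, ∫⁻ u, ‖f k u‖₊ ∂μ = ENNReal.ofReal (1 - rexp (-(c * (ν * p k)))) := by
      intro k
      rw [← hintk k, ofReal_integral_eq_lintegral_ofReal (hfint k) (Eventually.of_forall (hfnn k))]
      exact lintegral_congr fun u => Real.enorm_eq_ofReal (hfnn k u)
    simp only [heq]
    have hle : ∀ k, ENNReal.ofReal (1 - rexp (-(c * (ν * p k)))) ≤ ENNReal.ofReal (c * ν * p k) := by
      intro k
      apply ENNReal.ofReal_le_ofReal
      have := Real.add_one_le_exp (-(c * (ν * p k)))
      nlinarith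
    have hsum : Summable (fun k => c * ν * p k) := by
      simpa [mul_assoc] using (hp.mul_left (c * ν))
    have h2 : (∑' k, ENNReal.ofReal (c * ν * p k)) = ENNReal.ofReal (∑' k, c * ν * p k) :=
      (ENNReal.ofReal_tsum_of_nonneg (fun k => by have := (hp_pos k).le; positivity) hsum).symm
    exact ne_top_of_le_ne_top (by rw [h2]; exact ENNReal.ofReal_ne_top) (ENNReal.tsum_le_tsum hle)
  have key := integral_tsum hmeas hnorm
  have hpt : ∀ u ∈ Set.Ioi (0:ℝ), (∑' k, f k u) = c * rexp (-(c*u)) * A p (ν/u) := by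
    intro u hu
    have hu0 : (0:ℝ) < u := hu
    have hνu : (0:ℝ) < ν / u := by positivity
    set S : Set ℕ := {i : ℕ | p i ≥ 1 / (ν / u)} with hS
    have hSfin : S.Finite := finite_set hp hνu
    have hiff : ∀ k, u ∈ Set.Ioc (0:ℝ) (ν * p k) ↔ k ∈ S := by
      intro k
      constructor
      · rintro ⟨-, h2⟩
        show 1 / (ν / u) ≤ p k
        rw [one_div_div, div_le_iff₀ hν]
        linarith [mul_comm ν (p k)]
      · intro hk
        refine ⟨hu0, ?_⟩
        have : 1 / (ν / u) ≤ p k := hk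
        rw [one_div_div, div_le_iff₀ hν] at this
        linarith [mul_comm ν (p k)]
    have hmem : ∀ k, f k u = S.indicator (fun _ => g u) k := by
      intro k
      by_cases h : k ∈ S
      · rw [Set.indicator_of_mem h, hf]
        simp only [Set.indicator_of_mem ((hiff k).mpr h)]
      · rw [Set.indicator_of_notMem h, hf]
        simp only [Set.indicator_of_notMem (fun hc => h ((hiff k).mp hc))]
    rw [tsum_congr hmem,
      tsum_eq_sum (s := hSfin.toFinset)
        (fun k hk => Set.indicator_of_notMem (by simpa using hk) _),
      Finset.sum_congr rfl (fun k hk => Set.indicator_of_mem (by simpa using hk) _),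
      Finset.sum_const, ← Set.ncard_eq_toFinset_card S hSfin]
    rw [nsmul_eq_mul, A, mul_comm]
  calc ∑' k, (1 - rexp (-(c * (ν * p k)))) = ∑' k, ∫ u, f k u ∂μ := by
        exact tsum_congr fun k => (hintk k).symm
    _ = ∫ u, (∑' k, f k u) ∂μ := key.symm
    _ = ∫ u in Set.Ioi (0:ℝ), c * rexp (-(c*u)) * A p (ν/u) :=
        setIntegral_congr_fun measurableSet_Ioi hpt

section RV
variable {p : ℕ → ℝ} {θ : ℝ} {L : ℝ → ℝ}

lemma A_one_le {p : ℕ → ℝ} (hp : Summable p) (hp0 : 0 < p 0) {x : ℝ} (hx : 1 / p 0 ≤ x) :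
    1 ≤ A p x := by
  have hxpos : 0 < x := lt_of_lt_of_le (by positivity) hx
  have h0 : (0 : ℕ) ∈ {i : ℕ | p i ≥ 1 / x} := by
    simp only [mem_setOf_eq, ge_iff_le]
    rw [div_le_iff₀ hxpos]
    calc (1:ℝ) = (1 / p 0) * p 0 := by field_simp
    _ ≤ x * p 0 := mul_le_mul_of_nonneg_right hx hp0.le
    _ = p 0 * x := mul_comm _ _
  have h1 : 0 < {i : ℕ | p i ≥ 1 / x}.ncard :=
    (Set.ncard_pos (finite_set hp hxpos)).mpr ⟨0, h0⟩
  unfold A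
  exact_mod_cast h1

lemma A_mono {p : ℕ → ℝ} (hp : Summable p) {x y : ℝ} (hx : 0 < x) (hxy : x ≤ y) :
    A p x ≤ A p y := by
  have hy : 0 < y := hx.trans_le hxy
  have hsub : {i : ℕ | p i ≥ 1 / x} ⊆ {i : ℕ | p i ≥ 1 / y} := fun i hi =>
    le_trans (one_div_le_one_div_of_le hx hxy) hi
  unfold A
  exact_mod_cast Set.ncard_le_ncard hsub (finite_set hp hy)

lemma A_pos_eventually (hp : Summable p) (hp0 : 0 < p 0) :
    ∀ᶠ x : ℝ in atTop, 1 ≤ A p x :=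
  eventually_atTop.mpr ⟨1 / p 0, fun x hx => A_one_le hp hp0 hx⟩

lemma A_ratio_tendsto (hp : Summable p) (hp0 : 0 < p 0)
    (hL : ∀ c > (0 : ℝ), Tendsto (fun x => L (c * x) / L x) atTop (𝓝 1))
    (hα : ∀ x > (0 : ℝ), A p x = x ^ θ * L x)
    {u : ℝ} (hu : 0 < u) :
    Tendsto (fun x : ℝ => A p (x / u) / A p x) atTop (𝓝 (u ^ (-θ))) := by
  have hev : ∀ᶠ x : ℝ in atTop, A p (x / u) / A p x = u ^ (-θ) * (L (u⁻¹ * x) / L x) := by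
    filter_upwards [A_pos_eventually hp hp0, eventually_gt_atTop (0:ℝ)] with x hA hx
    have hxu : 0 < x / u := by positivity
    have hLx : 0 < L x := by
      have h1 : 0 < A p x := lt_of_lt_of_le one_pos hA
      rw [hα x hx] at h1
      have hxθ : (0:ℝ) < x ^ θ := rpow_pos_of_pos hx θ
      nlinarith
    rw [hα _ hxu, hα _ hx]
    have h2 : (x / u) ^ θ = x ^ θ * u ^ (-θ) := by
      rw [div_rpow hx.le hu.le, rpow_neg hu.le, div_eq_mul_inv]
    rw [h2]
    have hxθ : (0:ℝ) < x ^ θ := rpow_pos_of_pos hx θ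
    have huθ : (0:ℝ) < u ^ (-θ) := rpow_pos_of_pos hu _
    rw [show x / u = u⁻¹ * x by ring]
    field_simp
  have hlim : Tendsto (fun x : ℝ => u ^ (-θ) * (L (u⁻¹ * x) / L x)) atTop (𝓝 (u ^ (-θ))) := by
    have := (hL u⁻¹ (by positivity)).const_mul (u ^ (-θ))
    simpa using this
  exact Tendsto.congr' (hev.mono fun x hx => hx.symm) hlim
end RV

section Potter
variable {p : ℕ → ℝ} {θ : ℝ} {L : ℝ → ℝ}

lemma A_nonneg (p : ℕ → ℝ) (x : ℝ) : 0 ≤ A p x := Nat.cast_nonneg _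

lemma doubling (hp : Summable p) (hp0 : 0 < p 0)
    (hL : ∀ c > (0 : ℝ), Tendsto (fun x => L (c * x) / L x) atTop (𝓝 1))
    (hα : ∀ x > (0 : ℝ), A p x = x ^ θ * L x) (hθ1 : θ < 1) :
    ∀ᶠ x : ℝ in atTop, A p (2 * x) ≤ 2 ^ ((1+θ)/2) * A p x := by
  have h := A_ratio_tendsto hp hp0 hL hα (u := (1:ℝ)/2) one_half_pos
  have hlt : ((1:ℝ)/2) ^ (-θ) < (2:ℝ) ^ ((1+θ)/2) := by
    rw [one_div, inv_rpow (by norm_num), ← rpow_neg (by norm_num), neg_neg]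
    exact (Real.rpow_lt_rpow_left_iff one_lt_two).mpr (by linarith)
  filter_upwards [h.eventually_lt_const hlt, A_pos_eventually hp hp0,
    eventually_gt_atTop (0:ℝ)] with x h1 h2 hx
  have hApos : 0 < A p x := lt_of_lt_of_le one_pos h2
  have h3 := (div_lt_iff₀ hApos).mp h1
  rw [show x / (1/2) = 2 * x by ring] at h3
  exact h3.le

lemma pow_bound (hp : Summable p) {X C : ℝ} (hX1 : 1 ≤ X) (hC : 0 ≤ C)
    (hD : ∀ x ≥ X, A p (2*x) ≤ C * A p x) :
    ∀ m : ℕ, ∀ x ≥ X, A p (2^m * x) ≤ C^m * A p x := by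
  intro m
  induction m with
  | zero => intro x _; simp
  | succ m ih =>
    intro x hx
    have hx0 : 0 < x := lt_of_lt_of_le one_pos (hX1.trans hx)
    have h2 : (2:ℝ)^m * x ≥ X :=
      le_trans hx (le_mul_of_one_le_left hx0.le (one_le_pow₀ one_le_two))
    calc A p (2^(m+1) * x) = A p (2 * (2^m * x)) := by ring_nf
      _ ≤ C * A p (2^m * x) := hD _ h2
      _ ≤ C * (C^m * A p x) := mul_le_mul_of_nonneg_left (ih x hx) hC
      _ = C^(m+1) * A p x := by ring

end Potter

section Potter2
variable {p : ℕ → ℝ} {θ : ℝ}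

lemma potter (hp : Summable p) {X : ℝ} (hX1 : 1 ≤ X) (hθ' : 0 ≤ (1+θ)/2)
    (hD : ∀ x ≥ X, A p (2*x) ≤ (2:ℝ)^((1+θ)/2) * A p x) :
    ∀ x ≥ X, ∀ u : ℝ, 0 < u → u ≤ 1 →
      A p (x / u) ≤ (2:ℝ)^((1+θ)/2) * u^(-((1+θ)/2)) * A p x := by
  intro x hx u hu hu1
  set θ' := (1+θ)/2 with hθ'def
  have hC : (0:ℝ) ≤ 2^θ' := (rpow_pos_of_pos two_pos _).le
  have hx0 : 0 < x := lt_of_lt_of_le one_pos (hX1.trans hx)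
  obtain ⟨m, hm1, hm2⟩ : ∃ m : ℕ, 1/u ≤ (2:ℝ)^m ∧ (2:ℝ)^m ≤ 2/u := by
    have hex : ∃ m : ℕ, 1/u < (2:ℝ)^m := pow_unbounded_of_one_lt _ one_lt_two
    classical
    refine ⟨Nat.find hex, (Nat.find_spec hex).le, ?_⟩
    rcases Nat.eq_zero_or_pos (Nat.find hex) with h0 | hpos
    · rw [h0, pow_zero, le_div_iff₀ hu]; linarith
    · have hlt : ¬ (1/u < (2:ℝ)^(Nat.find hex - 1)) :=
        Nat.find_min hex (Nat.sub_lt hpos one_pos)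
      have h5 : (2:ℝ)^(Nat.find hex - 1) ≤ 1/u := not_lt.mp hlt
      rw [show Nat.find hex = (Nat.find hex - 1) + 1 from (Nat.succ_pred_eq_of_pos hpos).symm,
        pow_succ]
      calc (2:ℝ)^(Nat.find hex - 1) * 2 ≤ (1/u) * 2 := by nlinarith
        _ = 2/u := by ring
  have h1 : x / u ≤ 2^m * x := by
    rw [div_eq_mul_inv, mul_comm ((2:ℝ)^m) x, ← one_div]
    exact mul_le_mul_of_nonneg_left hm1 hx0.le
  have h2 := A_mono hp (show (0:ℝ) < x/u by positivity) h1
  have h3 := pow_bound hp hX1 hC hD m x hx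
  have h4 : ((2:ℝ)^θ')^m ≤ 2^θ' * u^(-θ') := by
    have e1 : ((2:ℝ)^θ')^m = ((2:ℝ)^m : ℝ)^θ' := by
      rw [← rpow_natCast ((2:ℝ)^θ') m, ← rpow_natCast (2:ℝ) m,
        ← rpow_mul (by norm_num : (0:ℝ) ≤ 2), ← rpow_mul (by norm_num : (0:ℝ) ≤ 2), mul_comm]
    rw [e1]
    calc ((2:ℝ)^m : ℝ)^θ' ≤ (2/u)^θ' := rpow_le_rpow (by positivity) hm2 hθ'
      _ = 2^θ' * u^(-θ') := by
        rw [div_rpow (by norm_num : (0:ℝ) ≤ 2) hu.le, rpow_neg hu.le, div_eq_mul_inv]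
  calc A p (x/u) ≤ A p (2^m * x) := h2
    _ ≤ ((2:ℝ)^θ')^m * A p x := h3
    _ ≤ 2^θ' * u^(-θ') * A p x := mul_le_mul_of_nonneg_right h4 (A_nonneg p x)

end Potter2

section Gamma
lemma gamma_integral {c θ : ℝ} (hc : 0 < c) (hθ : 0 < θ) (hθ1 : θ < 1) :
    ∫ u in Set.Ioi (0:ℝ), c * rexp (-(c*u)) * u ^ (-θ) = c ^ θ * Real.Gamma (1-θ) := by
  have hg : Real.Gamma (1-θ) = ∫ x in Set.Ioi (0:ℝ), rexp (-x) * x ^ (-θ) := by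
    rw [Real.Gamma_eq_integral (by linarith)]
    congr 1
    funext x
    norm_num
  have hsub := integral_comp_mul_left_Ioi (fun y => rexp (-y) * y ^ (-θ)) 0 hc
  simp only [mul_zero, smul_eq_mul] at hsub
  have hpt : ∀ u ∈ Set.Ioi (0:ℝ),
      c * rexp (-(c*u)) * u ^ (-θ) = (c * c^θ) * (rexp (-(c*u)) * (c*u) ^ (-θ)) := by
    intro u hu
    have hu0 : (0:ℝ) < u := hu
    rw [mul_rpow hc.le hu0.le, rpow_neg hc.le]
    have hcθ : (0:ℝ) < c ^ θ := rpow_pos_of_pos hc θ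
    field_simp
  rw [setIntegral_congr_fun measurableSet_Ioi hpt, MeasureTheory.integral_const_mul, hsub, hg]
  have hcθ : (0:ℝ) < c ^ θ := rpow_pos_of_pos hc θ
  field_simp

lemma integrable_exp_rpow {c θ : ℝ} (hc : 0 < c) (hθ1 : θ < 1) :
    IntegrableOn (fun u => rexp (-(c*u)) * u ^ (-θ)) (Set.Ioi (0:ℝ)) volume := by
  have h1 : IntegrableOn (fun x => rexp (-x) * x ^ ((1-θ) - 1)) (Set.Ioi (0:ℝ)) volume :=
    Real.GammaIntegral_convergent (by linarith)
  have h2 : IntegrableOn (fun x => rexp (-x) * x ^ (-θ)) (Set.Ioi (0:ℝ)) volume := by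
    apply h1.congr_fun _ measurableSet_Ioi
    intro x _
    norm_num
  have h3 : IntegrableOn (fun x => rexp (-(c*x)) * (c*x) ^ (-θ)) (Set.Ioi (0:ℝ)) volume := by
    rw [show Set.Ioi (0:ℝ) = Set.Ioi (c * 0) by norm_num] at h2
    exact (integrableOn_Ioi_comp_mul_left_iff (fun x => rexp (-x) * x ^ (-θ)) 0 hc).mpr h2
  have h4 : IntegrableOn (fun x => (c:ℝ)^(-θ) * (rexp (-(c*x)) * x ^ (-θ))) (Set.Ioi (0:ℝ)) volume := by
    apply h3.congr_fun _ measurableSet_Ioi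
    intro x hx
    show rexp (-(c*x)) * (c*x) ^ (-θ) = c ^ (-θ) * (rexp (-(c*x)) * x ^ (-θ))
    rw [mul_rpow hc.le (le_of_lt hx)]
    ring
  have h5 : IntegrableOn (fun x => (c:ℝ)^θ * ((c:ℝ)^(-θ) * (rexp (-(c*x)) * x ^ (-θ))))
      (Set.Ioi (0:ℝ)) volume := h4.const_mul ((c:ℝ)^θ)
  apply h5.congr_fun _ measurableSet_Ioi
  intro x _
  show (c:ℝ)^θ * ((c:ℝ)^(-θ) * (rexp (-(c*x)) * x ^ (-θ))) = rexp (-(c*x)) * x ^ (-θ)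
  have h6 : (c:ℝ)^θ * c^(-θ) = 1 := by
    rw [← rpow_add hc]; norm_num
  calc (c:ℝ)^θ * ((c:ℝ)^(-θ) * (rexp (-(c*x)) * x ^ (-θ)))
      = ((c:ℝ)^θ * c^(-θ)) * (rexp (-(c*x)) * x ^ (-θ)) := by ring
    _ = rexp (-(c*x)) * x ^ (-θ) := by rw [h6]; ring
end Gamma

section Main
variable {p : ℕ → ℝ} {θ : ℝ} {L : ℝ → ℝ}

lemma main_pos (hp_pos : ∀ k, 0 < p k) (hp : Summable p)
    (hθ : 0 < θ) (hθ1 : θ < 1)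
    (hL : ∀ c > (0 : ℝ), Tendsto (fun x => L (c * x) / L x) atTop (𝓝 1))
    (hα : ∀ x > (0 : ℝ), A p x = x ^ θ * L x)
    {c : ℝ} (hc : 0 < c) :
    Tendsto (fun n : ℕ => (1 / A p (n:ℝ)) * ∑' k, (1 - rexp (-(c * ((n:ℝ) * p k))))) atTop
      (𝓝 (c ^ θ * Real.Gamma (1-θ))) := by
  set θ' := (1+θ)/2 with hθ'def
  have hθ'0 : 0 ≤ θ' := by rw [hθ'def]; linarith
  have hθ'1 : θ' < 1 := by rw [hθ'def]; linarith
  obtain ⟨X0, hX0⟩ := eventually_atTop.mp (doubling hp (hp_pos 0) hL hα hθ1)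
  set X := max X0 (max 1 (1/p 0)) with hXdef
  have hX1 : (1:ℝ) ≤ X := le_max_of_le_right (le_max_left _ _)
  have hXp : 1/p 0 ≤ X := le_max_of_le_right (le_max_right _ _)
  have hD : ∀ x ≥ X, A p (2*x) ≤ (2:ℝ)^θ' * A p x := fun x hx =>
    hX0 x (le_trans (le_max_left _ _) hx)
  have hpb := potter hp hX1 hθ'0 hD
  set M : ℝ → ℝ := fun x => if 0 < x then A p x else 0 with hMdef
  have hMmono : Monotone M := by
    intro x y hxy
    by_cases hx : 0 < x
    · have hy : 0 < y := lt_of_lt_of_le hx hxy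
      simp only [hMdef, if_pos hx, if_pos hy]
      exact A_mono hp hx hxy
    · simp only [hMdef, if_neg hx]
      by_cases hy : 0 < y
      · simp only [if_pos hy]; exact A_nonneg p y
      · simp only [if_neg hy]; exact le_refl 0
  have hMmeas : Measurable M := hMmono.measurable
  set μ := volume.restrict (Set.Ioi (0:ℝ)) with hμ
  set F : ℕ → ℝ → ℝ := fun n u => c * rexp (-(c*u)) * (A p ((n:ℝ)/u) / A p (n:ℝ)) with hF
  set B : ℝ → ℝ := fun u => c * rexp (-(c*u)) * (1 + (2:ℝ)^θ' * u^(-θ')) with hB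
  set f : ℝ → ℝ := fun u => c * rexp (-(c*u)) * u^(-θ) with hfdef
  have hce : Continuous (fun u : ℝ => c * rexp (-(c*u))) := by continuity
  -- measurability
  have hFmeas : ∀ᶠ n : ℕ in atTop, AEStronglyMeasurable (F n) μ := by
    filter_upwards [eventually_ge_atTop 1] with n hn
    have hn0 : (0:ℝ) < (n:ℝ) := by exact_mod_cast hn
    have hG : Measurable (fun u : ℝ => c * rexp (-(c*u)) * (M ((n:ℝ)/u) / A p (n:ℝ))) := by
      exact (hce.measurable).mul ((hMmeas.comp (measurable_const.div measurable_id)).div_const _)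
    refine hG.aestronglyMeasurable.congr ?_
    rw [hμ, Filter.EventuallyEq, ae_restrict_iff' measurableSet_Ioi]
    refine Eventually.of_forall (fun u hu => ?_)
    have hnu : (0:ℝ) < (n:ℝ)/u := div_pos hn0 hu
    simp only [hF, hMdef, if_pos hnu]
  -- bound integrable
  have hi1 : Integrable (fun u : ℝ => c * rexp (-(c*u))) μ := by
    have := (exp_neg_integrableOn_Ioi 0 hc).const_mul c
    simpa [neg_mul] using this
  have hi2 : Integrable (fun u : ℝ => ((2:ℝ)^θ' * c) * (rexp (-(c*u)) * u^(-θ'))) μ :=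
    (integrable_exp_rpow hc hθ'1).const_mul _
  have hBint : Integrable B μ := by
    have heq : B = fun u => (c * rexp (-(c*u))) + ((2:ℝ)^θ' * c) * (rexp (-(c*u)) * u^(-θ')) := by
      funext u; rw [hB]; ring
    rw [heq]
    exact hi1.add hi2
  -- domination
  have hbound : ∀ᶠ n : ℕ in atTop, ∀ᵐ u ∂μ, ‖F n u‖ ≤ B u := by
    filter_upwards [eventually_ge_atTop (max 1 ⌈X⌉₊)] with n hn
    have hn1 : (1:ℕ) ≤ n := le_trans (le_max_left _ _) hn
    have hnX : X ≤ (n:ℝ) := le_trans (Nat.le_ceil X) (by exact_mod_cast le_trans (le_max_right _ _) hn)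
    have hn0 : (0:ℝ) < (n:ℝ) := lt_of_lt_of_le one_pos (le_trans hX1 hnX)
    have hApos : (0:ℝ) < A p (n:ℝ) :=
      lt_of_lt_of_le one_pos (A_one_le hp (hp_pos 0) (le_trans hXp hnX))
    rw [hμ, ae_restrict_iff' measurableSet_Ioi]
    refine Eventually.of_forall (fun u hu => ?_)
    have hu0 : (0:ℝ) < u := hu
    have hnu : (0:ℝ) < (n:ℝ)/u := div_pos hn0 hu0
    have hce0 : (0:ℝ) ≤ c * rexp (-(c*u)) := by positivity
    have hFnn : 0 ≤ F n u := by
      apply mul_nonneg hce0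
      exact div_nonneg (A_nonneg _ _) hApos.le
    rw [Real.norm_of_nonneg hFnn]
    have hratio : A p ((n:ℝ)/u) / A p (n:ℝ) ≤ 1 + (2:ℝ)^θ' * u^(-θ') := by
      rcases le_or_gt u 1 with h1 | h1
      · have := hpb (n:ℝ) hnX u hu0 h1
        have h2 : A p ((n:ℝ)/u) / A p (n:ℝ) ≤ (2:ℝ)^θ' * u^(-θ') :=
          (div_le_iff₀ hApos).mpr this
        linarith
      · have h2 : A p ((n:ℝ)/u) ≤ A p (n:ℝ) :=
          A_mono hp hnu (div_le_self hn0.le h1.le)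
        have h3 : A p ((n:ℝ)/u) / A p (n:ℝ) ≤ 1 := by
          rw [div_le_one hApos]; exact h2
        have h4 : (0:ℝ) < (2:ℝ)^θ' * u^(-θ') := by positivity
        linarith
    calc F n u ≤ c * rexp (-(c*u)) * (1 + (2:ℝ)^θ' * u^(-θ')) :=
          mul_le_mul_of_nonneg_left hratio hce0
      _ = B u := rfl
  -- pointwise limit
  have hlim : ∀ᵐ u ∂μ, Tendsto (fun n : ℕ => F n u) atTop (𝓝 (f u)) := by
    rw [hμ, ae_restrict_iff' measurableSet_Ioi]
    refine Eventually.of_forall (fun u hu => ?_)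
    have hu0 : (0:ℝ) < u := hu
    have h1 := (A_ratio_tendsto hp (hp_pos 0) hL hα hu0).comp
      (tendsto_natCast_atTop_atTop (R := ℝ))
    have h2 := h1.const_mul (c * rexp (-(c*u)))
    simpa [hF, hfdef, Function.comp, mul_assoc] using h2
  have htend := tendsto_integral_filter_of_dominated_convergence B hFmeas hbound hBint hlim
  have hfint : ∫ u, f u ∂μ = c ^ θ * Real.Gamma (1-θ) := gamma_integral hc hθ hθ1
  rw [hfint] at htend
  -- identify the sequence
  refine Tendsto.congr' ?_ htend
  filter_upwards [eventually_ge_atTop 1] with n hn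
  have hn0 : (0:ℝ) < (n:ℝ) := by exact_mod_cast hn
  have hid := tsum_eq_integral hp_pos hp hc hn0
  rw [hid, ← MeasureTheory.integral_const_mul]
  exact integral_congr_ae (Eventually.of_forall (fun u => by rw [hF]; ring))
end Main


end CovarianceAux

open CovarianceAux in
/-- Limit covariance of the odd-occupancy process, `θ ∈ (0,1)`: for `0 < τ ≤ t`,
`(1/α(n)) (1/4) ∑_k (e^{−2p_k n(t−τ)} − e^{−2p_k n(t+τ)})
  → Γ(1−θ) 2^{θ−2} ((t+τ)^θ − (t−τ)^θ)`. -/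
theorem limit_covariance_odd_occupancy
    (p : ℕ → ℝ) (hp_pos : ∀ k, 0 < p k) (hp_mono : Antitone p)
    (hp_sum : ∑' k, p k = 1)
    (θ : ℝ) (hθ : θ ∈ Set.Ioo (0 : ℝ) 1)
    (L : ℝ → ℝ)
    (hL : ∀ c > (0 : ℝ), Tendsto (fun x => L (c * x) / L x) atTop (𝓝 1))
    (hα : ∀ x > (0 : ℝ), ((Set.ncard {i : ℕ | p i ≥ 1 / x} : ℝ)) = x ^ θ * L x)
    (τ t : ℝ) (hτ : 0 < τ) (hτt : τ ≤ t) :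
    Tendsto (fun n : ℕ =>
        (1 / ((Set.ncard {i : ℕ | p i ≥ 1 / (n : ℝ)} : ℝ))) * ((1 / 4) *
          ∑' k, (Real.exp (-(2 * p k * (n : ℝ) * (t - τ)))
            - Real.exp (-(2 * p k * (n : ℝ) * (t + τ))))))
      atTop
      (𝓝 (Real.Gamma (1 - θ) * (2 : ℝ) ^ (θ - 2) * ((t + τ) ^ θ - (t - τ) ^ θ))) := by
  obtain ⟨hθ0, hθ1⟩ := hθ
  have hp : Summable p := by
    by_contra h
    rw [tsum_eq_zero_of_not_summable h] at hp_sum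
    norm_num at hp_sum
  set a : ℝ := 2 * (t - τ) with ha_def
  set b : ℝ := 2 * (t + τ) with hb_def
  have ha0 : 0 ≤ a := by rw [ha_def]; linarith
  have hb0 : 0 < b := by rw [hb_def]; linarith
  have hsumm : ∀ (c : ℝ), 0 ≤ c → ∀ n : ℕ,
      Summable (fun k => 1 - rexp (-(c * ((n:ℝ) * p k)))) := by
    intro c hc n
    have hmaj : Summable (fun k => c * ((n:ℝ) * p k)) :=
      (hp.mul_left (c * (n:ℝ))).congr (fun k => by ring)
    refine Summable.of_nonneg_of_le (fun k => ?_) (fun k => ?_) hmaj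
    · have h1 : rexp (-(c * ((n:ℝ) * p k))) ≤ 1 := by
        apply Real.exp_le_one_iff.mpr
        have : 0 ≤ c * ((n:ℝ) * p k) := by
          have := (hp_pos k).le
          positivity
        linarith
      linarith
    · have := Real.add_one_le_exp (-(c * ((n:ℝ) * p k)))
      nlinarith
  have hb := main_pos hp_pos hp hθ0 hθ1 hL hα hb0
  have ha : Tendsto (fun n : ℕ => (1 / A p (n:ℝ)) * ∑' k, (1 - rexp (-(a * ((n:ℝ) * p k))))) atTop
      (𝓝 (a ^ θ * Real.Gamma (1-θ))) := by
    rcases eq_or_lt_of_le ha0 with h0 | hpos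
    · have hz : ∀ n : ℕ, (1 / A p (n:ℝ)) * ∑' k, (1 - rexp (-(a * ((n:ℝ) * p k)))) = 0 := by
        intro n
        have hzero : ∀ k, (1 - rexp (-(a * ((n:ℝ) * p k)))) = 0 := by
          intro k; rw [← h0]; simp
        rw [tsum_congr hzero, tsum_zero, mul_zero]
      have haz : a ^ θ = 0 := by
        rw [← h0]; exact Real.zero_rpow (ne_of_gt hθ0)
      rw [haz, zero_mul, funext hz]
      exact tendsto_const_nhds
    · exact main_pos hp_pos hp hθ0 hθ1 hL hα hpos
  have hcomb := (hb.sub ha).const_mul (1/4 : ℝ)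
  have hval : (1/4 : ℝ) * (b ^ θ * Real.Gamma (1-θ) - a ^ θ * Real.Gamma (1-θ))
      = Real.Gamma (1 - θ) * (2 : ℝ) ^ (θ - 2) * ((t + τ) ^ θ - (t - τ) ^ θ) := by
    have hbθ : b ^ θ = 2^θ * (t+τ)^θ := by
      rw [hb_def]; exact mul_rpow (by norm_num) (by linarith)
    have haθ : a ^ θ = 2^θ * (t-τ)^θ := by
      rw [ha_def]; exact mul_rpow (by norm_num) (by linarith)
    have h4 : (2:ℝ)^(2:ℝ) = 4 := by
      have h5 := Real.rpow_natCast (2:ℝ) 2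
      rw [Nat.cast_ofNat] at h5
      rw [h5]; norm_num
    have h2 : (2:ℝ)^(θ-(2:ℝ)) = 2^θ / 4 := by
      rw [Real.rpow_sub two_pos, h4]
    rw [hbθ, haθ, h2]; ring
  rw [hval] at hcomb
  refine Tendsto.congr ?_ hcomb
  intro n
  have hS : ∑' k, (rexp (-(2 * p k * (n : ℝ) * (t - τ))) - rexp (-(2 * p k * (n : ℝ) * (t + τ))))
      = (∑' k, (1 - rexp (-(b * ((n:ℝ) * p k))))) - ∑' k, (1 - rexp (-(a * ((n:ℝ) * p k)))) := by
    rw [← Summable.tsum_sub (hsumm b hb0.le n) (hsumm a ha0 n)]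
    apply tsum_congr
    intro k
    have e1 : 2 * p k * (n : ℝ) * (t - τ) = a * ((n:ℝ) * p k) := by rw [ha_def]; ring
    have e2 : 2 * p k * (n : ℝ) * (t + τ) = b * ((n:ℝ) * p k) := by rw [hb_def]; ring
    rw [e1, e2]; ring
  show (1/4 : ℝ) * ((1 / A p (n:ℝ)) * ∑' k, (1 - rexp (-(b * ((n:ℝ) * p k))))
      - (1 / A p (n:ℝ)) * ∑' k, (1 - rexp (-(a * ((n:ℝ) * p k)))))
    = (1 / A p (n:ℝ)) * ((1 / 4) * ∑' k, (rexp (-(2 * p k * (n : ℝ) * (t - τ)))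
        - rexp (-(2 * p k * (n : ℝ) * (t + τ)))))
  rw [hS]
  ring
end
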